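/- arXiv:1403.2649 — 4 statements merged into one kernel-verified Lean document; each statement's English description precedes it below -/
import Mathlib

section
/- Let Ω = Δ(A,B,C) be a nondegenerate triangle in ℝ² and let P be the single-point list consisting of f_Ω(0), the centroid of Ω. Then D_1^P(P;Ω) = 7/9. -/
open MeasureTheory Filter Real

noncomputable section

/-- Points of the plane. -/
abbrev Pt := ℝ × ℝ

/-- The (closed) triangle with vertices `A`, `B`, `C`: their convex hull. -/
def triangle (A B C : Pt) : Set Pt := convexHull ℝ {A, B, C}

/-- The triangle `Δ(A,B,C)` is nondegenerate iff `A`, `B`, `C` are not collinear. -/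
def Nondeg (A B C : Pt) : Prop := ¬ Collinear ℝ ({A, B, C} : Set Pt)

/-- Two-dimensional Lebesgue volume, as a real number. -/
def vol (S : Set Pt) : ℝ := (volume S).toReal

/-- Signed discrepancy `δ_N(S; P, Ω)` of the list of points `P` at the set `S`,
relative to the domain `Ω`. -/
def sdisc {N : ℕ} (S : Set Pt) (P : Fin N → Pt) (Ω : Set Pt) : ℝ :=
  vol (S ∩ Ω) / vol Ω - (Nat.card {i : Fin N // P i ∈ S} : ℝ) / N

/-- Discrepancy `D_N(𝒮; P, Ω)`: supremum of the absolute signed discrepancy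
over a class `𝒮` of sets. -/
def Disc {N : ℕ} (𝒮 : Set (Set Pt)) (P : Fin N → Pt) (Ω : Set Pt) : ℝ :=
  ⨆ S ∈ 𝒮, |sdisc S P Ω|

/-- The half-open parallelogram `𝒯_{a,b,C}` anchored at `C` with sides
`a(A-C)` and `b(B-C)`. -/
def parlg (A B C : Pt) (a b : ℝ) : Set Pt :=
  {x | ∃ s t : ℝ, 0 ≤ s ∧ s < a ∧ 0 ≤ t ∧ t < b ∧ x = C + s • (A - C) + t • (B - C)}

/-- The family `𝒮_C` of parallelograms anchored at `C`, intersected with the triangle. -/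
def anchoredFam (A B C : Pt) : Set (Set Pt) :=
  {S | ∃ a b : ℝ, 0 < a ∧ a ≤ 1 ∧ 0 < b ∧ b ≤ 1 ∧ S = parlg A B C a b ∩ triangle A B C}

/-- The class `𝒮_A ∪ 𝒮_B ∪ 𝒮_C` of anchored parallelograms of the triangle `Δ(A,B,C)`. -/
def parFam (A B C : Pt) : Set (Set Pt) :=
  anchoredFam B C A ∪ anchoredFam A C B ∪ anchoredFam A B C

/-- The parallelogram discrepancy `D_N^P(P; Δ(A,B,C))`. -/
def parDisc {N : ℕ} (P : Fin N → Pt) (A B C : Pt) : ℝ :=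
  Disc (parFam A B C) P (triangle A B C)

/-- Midpoint of two points. -/
def mid (P Q : Pt) : Pt := (2⁻¹ : ℝ) • (P + Q)

/-- A triangle recorded as the (ordered) triple of its vertices. -/
abbrev Tri2 := Pt × Pt × Pt

/-- The centroid of a triangle: the average of its three vertices. -/
def ctr (T : Tri2) : Pt := (3⁻¹ : ℝ) • (T.1 + T.2.1 + T.2.2)

/-- The point set of a triangle given by its vertices. -/
def triSet (T : Tri2) : Set Pt := triangle T.1 T.2.1 T.2.2

/-- The four-way subdivision of a triangle: subtriangle number `d ∈ {0,1,2,3}`. -/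
def subdiv (T : Tri2) (d : ℕ) : Tri2 :=
  let A := T.1; let B := T.2.1; let C := T.2.2
  if d = 0 then (mid B C, mid A C, mid A B)
  else if d = 1 then (A, mid A B, mid A C)
  else if d = 2 then (mid A B, B, mid B C)
  else (mid A C, mid B C, C)

/-- The triangular van der Corput point `f_T(i)`: digits of `i` in base `4` select a
nested subtriangle, and `f_T(i)` is its centroid. -/
def vdc (T : Tri2) (i : ℕ) : Pt :=
  if h : i = 0 then ctr T else vdc (subdiv T (i % 4)) (i / 4)
termination_by i
decreasing_by exact Nat.div_lt_self (Nat.pos_of_ne_zero h) (by norm_num)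

/-- The `i`-th subtriangle (for `i < 4^k`) of the standard level-`k` subdivision of `T`,
indexed by the base-4 digits of `i`. -/
def subdivAt (T : Tri2) : ℕ → ℕ → Tri2
  | 0, _ => T
  | (k+1), i => subdiv (subdivAt T k (i / 4)) (i % 4)

/-- The standard level-`k` subdivision of a triangle: the set of the `4^k` congruent
subtriangles obtained by `k` recursive four-way subdivisions. -/
def level (T : Tri2) : ℕ → Set Tri2
  | 0 => {T}
  | (k+1) => {S | ∃ S' ∈ level T k, ∃ d < 4, S = subdiv S' d}

/-- Riemann integrability (in the triangular-subdivision sense) of `f` on the closed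
triangle `T`, with integral mean `μ`: every sequence of tagged Riemann sums over the
level-`k` subdivisions converges to `μ`. -/
def RiemannMean (T : Tri2) (f : Pt → ℝ) (μ : ℝ) : Prop :=
  ∀ x : ℕ → ℕ → Pt, (∀ k i, i < 4^k → x k i ∈ triSet (subdivAt T k i)) →
    Tendsto (fun k => (4^k : ℝ)⁻¹ * ∑ i ∈ Finset.range (4^k), f (x k i)) atTop (nhds μ)

/-- A real number is a quadratic irrational if it has the form `(a + b√c)/d` with
integers `a,b,c,d`, `b ≠ 0`, `d ≠ 0`, `c > 0` and `c` not a perfect square. -/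
def QuadIrr (θ : ℝ) : Prop :=
  ∃ a b c d : ℤ, b ≠ 0 ∧ d ≠ 0 ∧ 0 < c ∧ (∀ m : ℤ, c ≠ m ^ 2) ∧
    θ = ((a : ℝ) + (b : ℝ) * Real.sqrt (c : ℝ)) / (d : ℝ)

/-- Distance from a real number to the nearest integer. -/
def distToInt (x : ℝ) : ℝ := |x - round x|

/-- A real number `θ` is badly approximable if `n‖nθ‖ > c` for all positive `n`,
for some constant `c > 0`. -/
def BadlyApprox (θ : ℝ) : Prop :=
  ∃ c : ℝ, 0 < c ∧ ∀ n : ℕ, 0 < n → c < (n : ℝ) * distToInt ((n : ℝ) * θ)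

end


noncomputable section AuxDiscProof
open MeasureTheory Set

def T0 : Set Pt := {p : Pt | 0 ≤ p.1 ∧ 0 ≤ p.2 ∧ p.1 + p.2 ≤ 1}
def R0 (a b : ℝ) : Set Pt := Set.Ico 0 a ×ˢ Set.Ico 0 b
def stdlin (u v : Pt) : Pt →ₗ[ℝ] Pt :=
  Matrix.toLin (Module.Basis.finTwoProd ℝ) (Module.Basis.finTwoProd ℝ) !![u.1, v.1; u.2, v.2]
def stdmap (c u v : Pt) : Pt → Pt := fun p => c + stdlin u v p

lemma stdlin_apply (u v p : Pt) : stdlin u v p = p.1 • u + p.2 • v := by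
  simp [stdlin, Prod.ext_iff]; constructor <;> ring

lemma stdmap_apply (c u v p : Pt) : stdmap c u v p = c + p.1 • u + p.2 • v := by
  simp [stdmap, stdlin_apply, add_assoc]

lemma vol_stdmap (c u v : Pt) (s : Set Pt) :
    volume (stdmap c u v '' s) = ENNReal.ofReal |u.1*v.2 - v.1*u.2| * volume s := by
  have hdet : LinearMap.det (stdlin u v) = u.1*v.2 - v.1*u.2 := by
    simp [stdlin, Matrix.det_fin_two_of]
  have h1 : stdmap c u v '' s = (fun x => c + x) '' (stdlin u v '' s) := by
    rw [← Set.image_comp]; rfl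
  have h2 : (fun x : Pt => c + x) '' (stdlin u v '' s)
      = (fun x : Pt => -c + x) ⁻¹' (stdlin u v '' s) := by
    ext x
    constructor
    · rintro ⟨y, hy, rfl⟩; simpa using hy
    · intro hx; exact ⟨-c + x, hx, (add_neg_cancel_left c x)⟩
  rw [h1, h2, measure_preimage_add, Measure.addHaar_image_linearMap, hdet]

lemma stdmap_inj {u v : Pt} (hd : u.1*v.2 - v.1*u.2 ≠ 0) (c : Pt) :
    Function.Injective (stdmap c u v) := by
  intro p q hpq
  have h : p.1 • u + p.2 • v = q.1 • u + q.2 • v := by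
    have := hpq
    rw [stdmap_apply, stdmap_apply, add_assoc, add_assoc] at this
    exact add_left_cancel this
  rw [Prod.ext_iff] at h
  simp only [Prod.fst_add, Prod.snd_add, Prod.smul_fst, Prod.smul_snd, smul_eq_mul] at h
  obtain ⟨h1, h2⟩ := h
  have e1 : (p.1 - q.1) * (u.1*v.2 - v.1*u.2) = 0 := by linear_combination v.2 * h1 - v.1 * h2
  have e2 : (p.2 - q.2) * (u.1*v.2 - v.1*u.2) = 0 := by linear_combination u.1 * h2 - u.2 * h1
  have f1 : p.1 = q.1 := by
    rcases mul_eq_zero.1 e1 with h | h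
    · linarith
    · exact absurd h hd
  have f2 : p.2 = q.2 := by
    rcases mul_eq_zero.1 e2 with h | h
    · linarith
    · exact absurd h hd
  exact Prod.ext f1 f2

lemma convex_T0 : Convex ℝ T0 := by
  have h1 : Convex ℝ {p : Pt | 0 ≤ p.1} :=
    convex_halfSpace_ge (IsLinearMap.mk (fun x y => rfl) (fun c x => rfl)) 0
  have h2 : Convex ℝ {p : Pt | 0 ≤ p.2} :=
    convex_halfSpace_ge (IsLinearMap.mk (fun x y => rfl) (fun c x => rfl)) 0
  have h3 : Convex ℝ {p : Pt | p.1 + p.2 ≤ 1} :=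
    convex_halfSpace_le (IsLinearMap.mk (fun x y => by simp; ring) (fun c x => by simp; ring)) 1
  have : T0 = ({p : Pt | 0 ≤ p.1} ∩ {p : Pt | 0 ≤ p.2}) ∩ {p : Pt | p.1 + p.2 ≤ 1} := by
    ext p; simp [T0]; tauto
  rw [this]; exact (h1.inter h2).inter h3

lemma T0_eq : convexHull ℝ {((0:ℝ),(0:ℝ)), ((1:ℝ),(0:ℝ)), ((0:ℝ),(1:ℝ))} = T0 := by
  apply le_antisymm
  · apply convexHull_min _ convex_T0
    rintro p (rfl | rfl | rfl) <;> norm_num [T0]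
  · intro p hp
    obtain ⟨h1, h2, h3⟩ := hp
    rw [convexHull_insert (Set.insert_nonempty _ _), convexHull_pair]
    rw [mem_convexJoin]
    rcases eq_or_lt_of_le (by linarith : (0:ℝ) ≤ p.1 + p.2) with hσ | hσ
    · refine ⟨((0:ℝ),(0:ℝ)), rfl, ((1:ℝ),(0:ℝ)), left_mem_segment _ _ _, ?_⟩
      have hp1 : p.1 = 0 := by linarith
      have hp2 : p.2 = 0 := by linarith
      have : p = ((0:ℝ),(0:ℝ)) := Prod.ext hp1 hp2
      rw [this]; exact left_mem_segment _ _ _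
    · set σ := p.1 + p.2 with hσdef
      have hσ0 : σ ≠ 0 := ne_of_gt hσ
      refine ⟨((0:ℝ),(0:ℝ)), rfl, (p.1/σ, p.2/σ), ?_, ?_⟩
      · rw [segment_eq_image₂]
        refine ⟨(p.1/σ, p.2/σ), ⟨show (0:ℝ) ≤ p.1/σ by positivity, show (0:ℝ) ≤ p.2/σ by positivity, show p.1/σ + p.2/σ = 1 by field_simp; linarith⟩, ?_⟩
        simp [Prod.ext_iff]
      · rw [segment_eq_image₂]
        refine ⟨(1 - σ, σ), ⟨show (0:ℝ) ≤ 1 - σ by linarith, show (0:ℝ) ≤ σ by linarith, show 1 - σ + σ = 1 by ring⟩, ?_⟩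
        simp [Prod.ext_iff]
        constructor <;> field_simp

lemma isClosed_T0 : IsClosed T0 := by
  have : T0 = ({p : Pt | 0 ≤ p.1} ∩ {p : Pt | 0 ≤ p.2}) ∩ {p : Pt | p.1 + p.2 ≤ 1} := by
    ext p; simp [T0]; tauto
  rw [this]
  exact ((isClosed_le continuous_const continuous_fst).inter
    (isClosed_le continuous_const continuous_snd)).inter
    (isClosed_le (continuous_fst.add continuous_snd) continuous_const)

def T0' : Set Pt := {p : Pt | p.1 ≤ 1 ∧ p.2 ≤ 1 ∧ 1 ≤ p.1 + p.2}

lemma diag_null : volume {p : Pt | p.1 + p.2 = 1} = 0 := by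
  set l : Pt →ₗ[ℝ] ℝ := LinearMap.fst ℝ ℝ ℝ + LinearMap.snd ℝ ℝ ℝ with hl
  have hker : ((LinearMap.ker l : Submodule ℝ Pt) : Set Pt) = {p : Pt | p.1 + p.2 = 0} := by
    ext p; simp [hl, LinearMap.mem_ker]
  have hW : (LinearMap.ker l : Submodule ℝ Pt) ≠ ⊤ := by
    intro htop
    have : ((1:ℝ),(0:ℝ)) ∈ LinearMap.ker l := by rw [htop]; trivial
    rw [LinearMap.mem_ker] at this
    simp [hl] at this
  have h0 : volume ((LinearMap.ker l : Submodule ℝ Pt) : Set Pt) = 0 :=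
    Measure.addHaar_submodule volume _ hW
  have hpre : {p : Pt | p.1 + p.2 = 1}
      = (fun x : Pt => ((-1:ℝ),(0:ℝ)) + x) ⁻¹' ((LinearMap.ker l : Submodule ℝ Pt) : Set Pt) := by
    ext p
    simp [hker, Set.mem_preimage, Prod.ext_iff]
    constructor <;> intro h <;> linarith
  rw [hpre, measure_preimage_add, h0]

lemma vol_T0 : volume T0 = ENNReal.ofReal (1/2) := by
  have hunion : T0 ∪ T0' = Set.Icc (0:ℝ) 1 ×ˢ Set.Icc (0:ℝ) 1 := by
    ext p
    simp only [T0, T0', Set.mem_union, Set.mem_setOf_eq, Set.mem_prod, Set.mem_Icc]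
    constructor
    · rintro (⟨h1, h2, h3⟩ | ⟨h1, h2, h3⟩) <;>
        exact ⟨⟨by linarith, by linarith⟩, by linarith, by linarith⟩
    · rintro ⟨⟨h1, h2⟩, h3, h4⟩
      rcases le_or_gt (p.1 + p.2) 1 with h | h
      · exact Or.inl ⟨h1, h3, h⟩
      · exact Or.inr ⟨h2, h4, by linarith⟩
  have hsq : volume (Set.Icc (0:ℝ) 1 ×ˢ Set.Icc (0:ℝ) 1) = 1 := by
    rw [Measure.volume_eq_prod, Measure.prod_prod, Real.volume_Icc]
    simp
  have hinter : volume (T0 ∩ T0') = 0 := by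
    apply measure_mono_null _ diag_null
    rintro p ⟨⟨_, _, h3⟩, _, _, h6⟩
    exact le_antisymm h3 h6
  have hT0' : T0' = stdmap ((1:ℝ),(1:ℝ)) ((-1:ℝ),(0:ℝ)) ((0:ℝ),(-1:ℝ)) '' T0 := by
    ext q
    constructor
    · rintro ⟨h1, h2, h3⟩
      refine ⟨(1 - q.1, 1 - q.2), ⟨by simp; linarith, by simp; linarith, by simp; linarith⟩, ?_⟩
      rw [stdmap_apply]
      simp [Prod.ext_iff]
    · rintro ⟨p, ⟨h1, h2, h3⟩, rfl⟩
      rw [stdmap_apply]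
      refine ⟨?_, ?_, ?_⟩ <;> simp <;> linarith
  have hvolT0' : volume T0' = volume T0 := by
    rw [hT0', vol_stdmap]
    norm_num
  have hmeas : MeasurableSet T0' := by
    have : T0' = ({p : Pt | p.1 ≤ 1} ∩ {p : Pt | p.2 ≤ 1}) ∩ {p : Pt | 1 ≤ p.1 + p.2} := by
      ext p; simp [T0']; tauto
    rw [this]
    exact (((isClosed_le continuous_fst continuous_const).inter
      (isClosed_le continuous_snd continuous_const)).inter
      (isClosed_le continuous_const (continuous_fst.add continuous_snd))).measurableSet
  have key : volume (T0 ∪ T0') + volume (T0 ∩ T0') = volume T0 + volume T0' :=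
    measure_union_add_inter T0 hmeas
  rw [hunion, hsq, hinter, hvolT0', add_zero] at key
  have hfin : volume T0 ≠ ⊤ := by
    intro htop
    have hle : volume T0 ≤ 1 := by
      rw [← hsq]
      apply measure_mono
      rw [← hunion]; exact Set.subset_union_left
    rw [htop] at hle
    simp at hle
  have ht : (volume T0).toReal + (volume T0).toReal = 1 := by
    have := congrArg ENNReal.toReal key
    rw [ENNReal.toReal_add hfin hfin, ENNReal.toReal_one] at this
    exact this.symm
  have : (volume T0).toReal = 1/2 := by linarith
  rw [← ENNReal.ofReal_toReal hfin, this]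


def stdAff (c u v : Pt) : Pt →ᵃ[ℝ] Pt where
  toFun := stdmap c u v
  linear := stdlin u v
  map_vadd' := by
    intro p w
    simp only [stdmap, vadd_eq_add, map_add]
    abel

lemma triangle_eq (A B C : Pt) : triangle A B C = stdmap C (A-C) (B-C) '' T0 := by
  rw [← T0_eq, triangle]
  rw [show stdmap C (A-C) (B-C) = ⇑(stdAff C (A-C) (B-C)) from rfl,
    AffineMap.image_convexHull]
  congr 1
  rw [Set.image_insert_eq, Set.image_insert_eq, Set.image_singleton]
  have h0 : stdAff C (A-C) (B-C) ((0:ℝ),(0:ℝ)) = C := by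
    show stdmap C (A-C) (B-C) _ = C
    rw [stdmap_apply]; simp
  have h1 : stdAff C (A-C) (B-C) ((1:ℝ),(0:ℝ)) = A := by
    show stdmap C (A-C) (B-C) _ = A
    rw [stdmap_apply]; simp
  have h2 : stdAff C (A-C) (B-C) ((0:ℝ),(1:ℝ)) = B := by
    show stdmap C (A-C) (B-C) _ = B
    rw [stdmap_apply]; simp
  rw [h0, h1, h2]
  ext x; simp; tauto

lemma parlg_eq (A B C : Pt) (a b : ℝ) :
    parlg A B C a b = stdmap C (A-C) (B-C) '' R0 a b := by
  ext x
  constructor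
  · rintro ⟨s, t, h1, h2, h3, h4, rfl⟩
    exact ⟨(s, t), ⟨⟨h1, h2⟩, h3, h4⟩, by rw [stdmap_apply]⟩
  · rintro ⟨⟨s, t⟩, ⟨⟨h1, h2⟩, h3, h4⟩, rfl⟩
    exact ⟨s, t, h1, h2, h3, h4, by rw [stdmap_apply]⟩

lemma nondeg_det {A B C : Pt} (h : Nondeg A B C) :
    (A-C).1*(B-C).2 - (B-C).1*(A-C).2 ≠ 0 := by
  intro hd
  apply h
  have hd' : (A.1 - C.1) * (B.2 - C.2) - (B.1 - C.1) * (A.2 - C.2) = 0 := by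
    simpa using hd
  by_cases hAC : A = C
  · have : ({A, B, C} : Set Pt) = {B, C} := by
      subst hAC; ext x; simp [or_comm, or_assoc, or_left_comm]
    rw [this]; exact collinear_pair ℝ B C
  · rw [collinear_iff_of_mem (show C ∈ ({A,B,C}:Set Pt) by simp)]
    refine ⟨A - C, ?_⟩
    intro p hp
    have hu : A - C ≠ (0 : Pt) := sub_ne_zero.2 hAC
    rcases hp with rfl | rfl | rfl
    · exact ⟨1, by simp⟩
    · by_cases h1 : A.1 - C.1 = 0
      · have h2 : A.2 - C.2 ≠ 0 := by
          intro h2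
          exact hu (by apply Prod.ext <;> simp <;> linarith)
        have hw1 : p.1 - C.1 = 0 := by
          rcases mul_eq_zero.1 (show (p.1 - C.1) * (A.2 - C.2) = 0 by linear_combination -hd' + (p.2 - C.2) * h1) with h | h
          · exact h
          · exact absurd h h2
        refine ⟨(p.2 - C.2)/(A.2 - C.2), ?_⟩
        rw [vadd_eq_add]
        apply Prod.ext
        · show p.1 = (p.2 - C.2)/(A.2 - C.2) * (A.1 - C.1) + C.1
          rw [h1]; simp; linarith
        · show p.2 = (p.2 - C.2)/(A.2 - C.2) * (A.2 - C.2) + C.2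
          field_simp; ring
      · refine ⟨(p.1 - C.1)/(A.1 - C.1), ?_⟩
        rw [vadd_eq_add]
        apply Prod.ext
        · show p.1 = (p.1 - C.1)/(A.1 - C.1) * (A.1 - C.1) + C.1
          field_simp; ring
        · show p.2 = (p.1 - C.1)/(A.1 - C.1) * (A.2 - C.2) + C.2
          rw [div_mul_eq_mul_div, eq_comm, div_add' _ _ _ h1, div_eq_iff h1]
          linear_combination -hd'
    · exact ⟨0, by simp⟩


open scoped Classical in
lemma count_card (S : Set Pt) (x : Pt) :
    (Nat.card {i : Fin 1 // (fun _ : Fin 1 => x) i ∈ S} : ℝ) = if x ∈ S then 1 else 0 := by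
  split_ifs with hx
  · rw [Nat.card_congr (Equiv.subtypeUnivEquiv (fun _ => hx)), Nat.card_eq_fintype_card]
    simp
  · have : IsEmpty {i : Fin 1 // (fun _ : Fin 1 => x) i ∈ S} := ⟨fun i => hx i.2⟩
    rw [Nat.card_of_isEmpty]; simp

lemma vol_R0 (a b : ℝ) : volume (R0 a b) = ENNReal.ofReal a * ENNReal.ofReal b := by
  rw [R0, Measure.volume_eq_prod, Measure.prod_prod, Real.volume_Ico, Real.volume_Ico]
  simp

lemma R0T0_fin (a b : ℝ) : volume (R0 a b ∩ T0) ≠ ⊤ :=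
  ne_of_lt (lt_of_le_of_lt (measure_mono Set.inter_subset_right)
    (by rw [vol_T0]; exact ENNReal.ofReal_lt_top))

open scoped Classical in
lemma sdisc_eq (A B C : Pt) (h : Nondeg A B C) (a b : ℝ) :
    sdisc (parlg A B C a b ∩ triangle A B C) (fun _ : Fin 1 => (3⁻¹:ℝ) • (A+B+C))
      (triangle A B C)
      = 2 * (volume (R0 a b ∩ T0)).toReal
        - (if (3⁻¹:ℝ) < a ∧ (3⁻¹:ℝ) < b then 1 else 0) := by
  have hd : (A-C).1*(B-C).2 - (B-C).1*(A-C).2 ≠ 0 := nondeg_det h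
  have hinj := stdmap_inj hd C
  have hS : parlg A B C a b ∩ triangle A B C = stdmap C (A-C) (B-C) '' (R0 a b ∩ T0) := by
    rw [parlg_eq, triangle_eq, ← Set.image_inter hinj]
  rw [sdisc, hS, count_card]
  have hSΩ : stdmap C (A-C) (B-C) '' (R0 a b ∩ T0) ∩ triangle A B C
      = stdmap C (A-C) (B-C) '' (R0 a b ∩ T0) := by
    apply Set.inter_eq_left.2
    rw [triangle_eq]
    exact Set.image_mono Set.inter_subset_right
  rw [hSΩ]
  have habs : (0:ℝ) < |(A-C).1*(B-C).2 - (B-C).1*(A-C).2| := abs_pos.2 hd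
  have hvol1 : vol (stdmap C (A-C) (B-C) '' (R0 a b ∩ T0))
      = |(A-C).1*(B-C).2 - (B-C).1*(A-C).2| * (volume (R0 a b ∩ T0)).toReal := by
    rw [vol, vol_stdmap, ENNReal.toReal_mul, ENNReal.toReal_ofReal habs.le]
  have hvol2 : vol (triangle A B C)
      = |(A-C).1*(B-C).2 - (B-C).1*(A-C).2| * (1/2) := by
    rw [vol, triangle_eq, vol_stdmap, vol_T0, ENNReal.toReal_mul,
      ENNReal.toReal_ofReal habs.le, ENNReal.toReal_ofReal (by norm_num)]
  rw [hvol1, hvol2, mul_div_mul_left _ _ (ne_of_gt habs)]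
  have hcent : (3⁻¹:ℝ) • (A+B+C) = stdmap C (A-C) (B-C) ((3⁻¹:ℝ), (3⁻¹:ℝ)) := by
    rw [stdmap_apply]
    apply Prod.ext <;> simp <;> ring
  have hmem : ((3⁻¹:ℝ) • (A+B+C) ∈ stdmap C (A-C) (B-C) '' (R0 a b ∩ T0))
      ↔ ((3⁻¹:ℝ) < a ∧ (3⁻¹:ℝ) < b) := by
    rw [hcent, hinj.mem_set_image]
    constructor
    · rintro ⟨⟨⟨_, h1⟩, _, h2⟩, _⟩
      exact ⟨h1, h2⟩
    · rintro ⟨h1, h2⟩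
      refine ⟨⟨⟨by norm_num, h1⟩, by norm_num, h2⟩, ?_, ?_, ?_⟩ <;> norm_num
  by_cases hm : (3⁻¹:ℝ) < a ∧ (3⁻¹:ℝ) < b
  · rw [if_pos hm, if_pos (hmem.2 hm)]
    push_cast
    ring
  · rw [if_neg hm, if_neg (fun hh => hm (hmem.1 hh))]
    push_cast
    ring


lemma m_nonneg (a b : ℝ) : 0 ≤ (volume (R0 a b ∩ T0)).toReal := ENNReal.toReal_nonneg

lemma m_le_ab {a b : ℝ} (ha : 0 ≤ a) (hb : 0 ≤ b) :
    (volume (R0 a b ∩ T0)).toReal ≤ a * b := by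
  have hle : volume (R0 a b ∩ T0) ≤ ENNReal.ofReal a * ENNReal.ofReal b := by
    rw [← vol_R0]; exact measure_mono Set.inter_subset_left
  calc (volume (R0 a b ∩ T0)).toReal
      ≤ (ENNReal.ofReal a * ENNReal.ofReal b).toReal :=
        ENNReal.toReal_mono (ENNReal.mul_ne_top ENNReal.ofReal_ne_top ENNReal.ofReal_ne_top) hle
    _ = a * b := by rw [ENNReal.toReal_mul, ENNReal.toReal_ofReal ha, ENNReal.toReal_ofReal hb]

lemma m_le_half (a b : ℝ) : (volume (R0 a b ∩ T0)).toReal ≤ 1/2 := by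
  have hle : volume (R0 a b ∩ T0) ≤ ENNReal.ofReal (1/2) := by
    rw [← vol_T0]; exact measure_mono Set.inter_subset_right
  calc (volume (R0 a b ∩ T0)).toReal
      ≤ (ENNReal.ofReal (1/2 : ℝ)).toReal := ENNReal.toReal_mono ENNReal.ofReal_ne_top hle
    _ = 1/2 := ENNReal.toReal_ofReal (by norm_num)

lemma m_ge {a b : ℝ} (ha : (3⁻¹:ℝ) ≤ a) (hb : (3⁻¹:ℝ) ≤ b) :
    1/9 ≤ (volume (R0 a b ∩ T0)).toReal := by
  have hsub : R0 (3⁻¹:ℝ) (3⁻¹:ℝ) ⊆ R0 a b ∩ T0 := by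
    rintro p ⟨⟨h1, h2⟩, h3, h4⟩
    refine ⟨⟨⟨h1, lt_of_lt_of_le h2 ha⟩, h3, lt_of_lt_of_le h4 hb⟩, h1, h3, ?_⟩
    have : (3⁻¹:ℝ) + 3⁻¹ ≤ 1 := by norm_num
    linarith
  have hle : ENNReal.ofReal (3⁻¹:ℝ) * ENNReal.ofReal (3⁻¹:ℝ) ≤ volume (R0 a b ∩ T0) := by
    rw [← vol_R0]; exact measure_mono hsub
  have := ENNReal.toReal_mono (R0T0_fin a b) hle
  rw [ENNReal.toReal_mul, ENNReal.toReal_ofReal (by norm_num : (0:ℝ) ≤ 3⁻¹)] at this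
  linarith [this]

open scoped Classical in
lemma abs_sdisc_le (A B C : Pt) (h : Nondeg A B C) {a b : ℝ}
    (ha : 0 < a) (ha1 : a ≤ 1) (hb : 0 < b) (hb1 : b ≤ 1) :
    |sdisc (parlg A B C a b ∩ triangle A B C) (fun _ : Fin 1 => (3⁻¹:ℝ) • (A+B+C))
      (triangle A B C)| ≤ 7/9 := by
  rw [sdisc_eq A B C h a b]
  set m := (volume (R0 a b ∩ T0)).toReal with hm
  have hm0 : 0 ≤ m := m_nonneg a b
  have hub : m ≤ a * b := m_le_ab ha.le hb.le
  have h12 : m ≤ 1/2 := m_le_half a b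
  by_cases hc : (3⁻¹:ℝ) < a ∧ (3⁻¹:ℝ) < b
  · rw [if_pos hc]
    have hlb : 1/9 ≤ m := m_ge hc.1.le hc.2.le
    rw [abs_le]
    constructor <;> linarith
  · rw [if_neg hc]
    have h13 : m ≤ 1/3 := by
      rcases not_and_or.1 hc with hc | hc
      · push_neg at hc
        have : a * b ≤ 3⁻¹ * 1 := mul_le_mul hc hb1 hb.le (by norm_num)
        linarith
      · push_neg at hc
        have : a * b ≤ 1 * 3⁻¹ := mul_le_mul ha1 hc hb.le (by norm_num)
        linarith
    rw [abs_le]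
    constructor <;> linarith

lemma tri_perm1 (A B C : Pt) : triangle B C A = triangle A B C := by
  rw [triangle, triangle]
  congr 1
  ext x; simp only [Set.mem_insert_iff, Set.mem_singleton_iff]; tauto

lemma tri_perm2 (A B C : Pt) : triangle A C B = triangle A B C := by
  rw [triangle, triangle]
  congr 1
  ext x; simp only [Set.mem_insert_iff, Set.mem_singleton_iff]; tauto

lemma nd_perm1 {A B C : Pt} (h : Nondeg A B C) : Nondeg B C A := by
  rw [Nondeg, show ({B, C, A} : Set Pt) = {A, B, C} by
    ext x; simp only [Set.mem_insert_iff, Set.mem_singleton_iff]; tauto]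
  exact h

lemma nd_perm2 {A B C : Pt} (h : Nondeg A B C) : Nondeg A C B := by
  rw [Nondeg, show ({A, C, B} : Set Pt) = {A, B, C} by
    ext x; simp only [Set.mem_insert_iff, Set.mem_singleton_iff]; tauto]
  exact h

end AuxDiscProof

/-- the parallelogram discrepancy of the single-point list consisting of
the centroid `f_Ω(0)` of a nondegenerate triangle `Ω = Δ(A,B,C)` equals `7/9`. -/
theorem parDisc_centroid_eq (A B C : Pt) (h : Nondeg A B C) :
    parDisc (fun _ : Fin 1 => vdc (A, B, C) 0) A B C = 7 / 9 := by
  have hP : (fun _ : Fin 1 => vdc (A, B, C) 0)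
      = (fun _ : Fin 1 => (3⁻¹:ℝ) • (A + B + C)) := by
    funext i
    rw [vdc]
    simp [ctr]
  rw [parDisc, Disc, hP]
  have upper : ∀ S ∈ parFam A B C,
      |sdisc S (fun _ : Fin 1 => (3⁻¹:ℝ) • (A + B + C)) (triangle A B C)| ≤ 7/9 := by
    rintro S ((hS | hS) | hS)
    · obtain ⟨a, b, ha, ha1, hb, hb1, rfl⟩ := hS
      have := abs_sdisc_le B C A (nd_perm1 h) ha ha1 hb hb1
      rw [tri_perm1, show (3⁻¹:ℝ) • (B + C + A) = (3⁻¹:ℝ) • (A + B + C) by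
        rw [show B + C + A = A + B + C by abel]] at this
      rwa [tri_perm1]
    · obtain ⟨a, b, ha, ha1, hb, hb1, rfl⟩ := hS
      have := abs_sdisc_le A C B (nd_perm2 h) ha ha1 hb hb1
      rw [tri_perm2, show (3⁻¹:ℝ) • (A + C + B) = (3⁻¹:ℝ) • (A + B + C) by
        rw [show A + C + B = A + B + C by abel]] at this
      rwa [tri_perm2]
    · obtain ⟨a, b, ha, ha1, hb, hb1, rfl⟩ := hS
      exact abs_sdisc_le A B C h ha ha1 hb hb1
  have bddS : ∀ S, (⨆ _ : S ∈ parFam A B C,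
      |sdisc S (fun _ : Fin 1 => (3⁻¹:ℝ) • (A + B + C)) (triangle A B C)|) ≤ 7/9 :=
    fun S => Real.iSup_le (fun hS => upper S hS) (by norm_num)
  apply le_antisymm
  · exact Real.iSup_le bddS (by norm_num)
  · apply le_of_forall_lt
    intro c hc
    set ε : ℝ := min ((7/9 - c)/3) 3⁻¹ with hε_def
    have hε : 0 < ε := lt_min (by linarith) (by norm_num)
    have hε1 : ε ≤ (7/9 - c)/3 := min_le_left _ _
    have hε2 : ε ≤ 3⁻¹ := min_le_right _ _
    set a : ℝ := 3⁻¹ + ε with ha_def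
    have ha : 0 < a := by positivity
    have ha1 : a ≤ 1 := by
      rw [ha_def]
      have : (3⁻¹:ℝ) + 3⁻¹ ≤ 1 := by norm_num
      linarith
    set S : Set Pt := parlg A B C a a ∩ triangle A B C with hS_def
    have hmem : S ∈ parFam A B C := Or.inr ⟨a, a, ha, ha1, ha, ha1, rfl⟩
    have hval : c < |sdisc S (fun _ : Fin 1 => (3⁻¹:ℝ) • (A + B + C)) (triangle A B C)| := by
      rw [hS_def, sdisc_eq A B C h a a,
        if_pos ⟨show (3⁻¹:ℝ) < a by rw [ha_def]; linarith,
                show (3⁻¹:ℝ) < a by rw [ha_def]; linarith⟩]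
      set m := (volume (R0 a a ∩ T0)).toReal with hm
      have hub : m ≤ a * a := m_le_ab ha.le ha.le
      have key : c < 1 - 2 * (a * a) := by
        rw [ha_def]
        have hεε : ε * ε ≤ ε * 3⁻¹ := mul_le_mul_of_nonneg_left hε2 hε.le
        nlinarith [hεε, hε1, hε]
      calc c < 1 - 2 * (a * a) := key
        _ ≤ 1 - 2 * m := by linarith
        _ = -(2 * m - 1) := by ring
        _ ≤ |2 * m - 1| := neg_le_abs _
    calc c < |sdisc S (fun _ : Fin 1 => (3⁻¹:ℝ) • (A + B + C)) (triangle A B C)| := hval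
      _ = ⨆ _ : S ∈ parFam A B C,
            |sdisc S (fun _ : Fin 1 => (3⁻¹:ℝ) • (A + B + C)) (triangle A B C)| :=
          (ciSup_pos (f := fun _ : S ∈ parFam A B C =>
            |sdisc S (fun _ : Fin 1 => (3⁻¹:ℝ) • (A + B + C)) (triangle A B C)|) hmem).symm
      _ ≤ ⨆ S', ⨆ _ : S' ∈ parFam A B C,
            |sdisc S' (fun _ : Fin 1 => (3⁻¹:ℝ) • (A + B + C)) (triangle A B C)| := by
          apply le_ciSup (f := fun S' => ⨆ _ : S' ∈ parFam A B C,
            |sdisc S' (fun _ : Fin 1 => (3⁻¹:ℝ) • (A + B + C)) (triangle A B C)|)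
          exact ⟨7/9, by rintro x ⟨S', rfl⟩; exact bddS S'⟩
end

section
/- Let Ω = Δ(A,B,C) be a nondegenerate triangle in ℝ², let k ≥ 1 be an integer, N = 4^k, and let P = (f_Ω(0), …, f_Ω(N−1)) be the first N triangular van der Corput points of Ω. Then sup_{0 < b ≤ 1} |δ_N(𝒯_{1,b,C} ∩ Ω; P, Ω)| = 2/(3√N) − 1/(9N); that is, the supremum of the absolute signed discrepancy over the full-width parallelogram strips anchored at C equals 2/(3√N) − 1/(9N). -/
open MeasureTheory Filter Real

set_option linter.unreachableTactic false
set_option linter.unusedTactic false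
set_option maxHeartbeats 1000000

noncomputable section SVDC

/-- scalar subdivision -/
def ssub (t : ℝ × ℝ × ℝ) (d : ℕ) : ℝ × ℝ × ℝ :=
  let u := t.1; let v := t.2.1; let w := t.2.2
  if d = 0 then ((v+w)/2, (u+w)/2, (u+v)/2)
  else if d = 1 then (u, (u+v)/2, (u+w)/2)
  else if d = 2 then ((u+v)/2, v, (v+w)/2)
  else ((u+w)/2, (v+w)/2, w)

def sctr (t : ℝ × ℝ × ℝ) : ℝ := (t.1 + t.2.1 + t.2.2)/3

def svdc (t : ℝ × ℝ × ℝ) (i : ℕ) : ℝ :=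
  if h : i = 0 then sctr t else svdc (ssub t (i % 4)) (i / 4)
termination_by i
decreasing_by exact Nat.div_lt_self (Nat.pos_of_ne_zero h) (by norm_num)

lemma sctr_ssub_zero (t : ℝ × ℝ × ℝ) : sctr (ssub t 0) = sctr t := by
  simp only [sctr, ssub]
  norm_num
  ring

lemma svdc_step (t : ℝ × ℝ × ℝ) (j d : ℕ) (hd : d < 4) :
    svdc t (4*j + d) = svdc (ssub t d) j := by
  rcases Nat.eq_zero_or_pos (4*j+d) with h | h
  · have hj : j = 0 := by omega
    have hd0 : d = 0 := by omega
    subst hj; subst hd0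
    rw [svdc, svdc]
    simp [sctr_ssub_zero]
  · rw [svdc]
    have h4 : (4*j+d) % 4 = d := by omega
    have h5 : (4*j+d) / 4 = j := by omega
    simp only [h4, h5]
    rw [dif_neg (by omega)]

/-- indicator-style count value -/
def cnt01 (x b : ℝ) : ℝ := if x < b then 1 else 0

/-- number (as a real) of `i < 4^k` with `svdc t i < b` -/
def sfreq (t : ℝ × ℝ × ℝ) (k : ℕ) (b : ℝ) : ℝ :=
  ∑ i ∈ Finset.range (4^k), cnt01 (svdc t i) b

lemma sum_range_four_mul {M : Type*} [AddCommMonoid M] (n : ℕ) (f : ℕ → M) :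
    ∑ i ∈ Finset.range (4*n), f i
      = ∑ j ∈ Finset.range n, (f (4*j) + f (4*j+1) + f (4*j+2) + f (4*j+3)) := by
  induction n with
  | zero => simp
  | succ n ih =>
    have h : 4*(n+1) = 4*n + 1 + 1 + 1 + 1 := by ring
    rw [h, Finset.sum_range_succ, Finset.sum_range_succ, Finset.sum_range_succ,
      Finset.sum_range_succ, ih, Finset.sum_range_succ]
    have e1 : 4*n+1+1 = 4*n+2 := by ring
    have e2 : 4*n+1+1+1 = 4*n+3 := by ring
    rw [e1, e2]
    abel

lemma sfreq_succ (t : ℝ × ℝ × ℝ) (k : ℕ) (b : ℝ) :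
    sfreq t (k+1) b = sfreq (ssub t 0) k b + sfreq (ssub t 1) k b
      + sfreq (ssub t 2) k b + sfreq (ssub t 3) k b := by
  unfold sfreq
  have h : (4:ℕ)^(k+1) = 4 * 4^k := by ring
  rw [h, sum_range_four_mul]
  rw [Finset.sum_add_distrib, Finset.sum_add_distrib, Finset.sum_add_distrib]
  congr 1
  · congr 1
    · congr 1
      · exact Finset.sum_congr rfl fun j _ => by
          rw [show 4*j = 4*j+0 by ring, svdc_step t j 0 (by norm_num)]
      · exact Finset.sum_congr rfl fun j _ => by rw [svdc_step t j 1 (by norm_num)]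
    · exact Finset.sum_congr rfl fun j _ => by rw [svdc_step t j 2 (by norm_num)]
  · exact Finset.sum_congr rfl fun j _ => by rw [svdc_step t j 3 (by norm_num)]

end SVDC

noncomputable section SGRID
open Finset

def gridX (K : ℕ) (a e b : ℝ) : ℝ :=
  ∑ m ∈ Finset.range K,
    (((K:ℝ) - m) * cnt01 (a + (3*m+1)*e) b + ((K:ℝ) - m - 1) * cnt01 (a + (3*m+2)*e) b)

def gridY (K : ℕ) (a e b : ℝ) : ℝ :=
  ∑ m ∈ Finset.range K,
    ((m:ℝ) * cnt01 (a + (3*m+1)*e) b + ((m:ℝ) + 1) * cnt01 (a + (3*m+2)*e) b)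

lemma triple_eq (x y z x' y' z' : ℝ) (h1 : x = x') (h2 : y = y') (h3 : z = z') :
    ((x, y, z) : ℝ × ℝ × ℝ) = (x', y', z') := by rw [h1, h2, h3]

lemma ssub_X0 (a h : ℝ) : ssub (a, a+h, a) 0 = (a + h/2, a, a + h/2) := by
  simp only [ssub]; norm_num; first | exact ⟨by ring, by ring, by ring⟩ | exact ⟨by ring, by ring⟩ | ring
lemma ssub_X1 (a h : ℝ) : ssub (a, a+h, a) 1 = (a, a + h/2, a) := by
  simp only [ssub]; norm_num; first | exact ⟨by ring, by ring, by ring⟩ | exact ⟨by ring, by ring⟩ | ring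
lemma ssub_X2 (a h : ℝ) : ssub (a, a+h, a) 2 = (a + h/2, a + h/2 + h/2, a + h/2) := by
  simp only [ssub]; norm_num; first | exact ⟨by ring, by ring, by ring⟩ | exact ⟨by ring, by ring⟩ | ring
lemma ssub_X3 (a h : ℝ) : ssub (a, a+h, a) 3 = (a, a + h/2, a) := by
  simp only [ssub]; norm_num; first | exact ⟨by ring, by ring, by ring⟩ | exact ⟨by ring, by ring⟩ | ring
lemma ssub_Y0 (a h : ℝ) : ssub (a+h, a, a+h) 0 = (a + h/2, a + h/2 + h/2, a + h/2) := by
  simp only [ssub]; norm_num; first | exact ⟨by ring, by ring, by ring⟩ | exact ⟨by ring, by ring⟩ | ring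
lemma ssub_Y1 (a h : ℝ) : ssub (a+h, a, a+h) 1 = (a + h/2 + h/2, a + h/2, a + h/2 + h/2) := by
  simp only [ssub]; norm_num; first | exact ⟨by ring, by ring, by ring⟩ | exact ⟨by ring, by ring⟩ | ring
lemma ssub_Y2 (a h : ℝ) : ssub (a+h, a, a+h) 2 = (a + h/2, a, a + h/2) := by
  simp only [ssub]; norm_num; first | exact ⟨by ring, by ring, by ring⟩ | exact ⟨by ring, by ring⟩ | ring
lemma ssub_Y3 (a h : ℝ) : ssub (a+h, a, a+h) 3 = (a + h/2 + h/2, a + h/2, a + h/2 + h/2) := by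
  simp only [ssub]; norm_num; first | exact ⟨by ring, by ring, by ring⟩ | exact ⟨by ring, by ring⟩ | ring

lemma sfreq_grid (k : ℕ) : ∀ a h b : ℝ,
    sfreq (a, a+h, a) k b = gridX (2^k) a (h/(3*2^k)) b
    ∧ sfreq (a+h, a, a+h) k b = gridY (2^k) a (h/(3*2^k)) b := by
  induction k with
  | zero =>
    intro a h b
    constructor
    · unfold sfreq gridX
      rw [show (4:ℕ)^0 = 1 from rfl, show (2:ℕ)^0 = 1 from rfl,
        Finset.sum_range_one, Finset.sum_range_one, svdc]
      simp only [sctr]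
      rw [show (a + (a+h) + a)/3 = a + (3*((0:ℕ):ℝ)+1)*(h/(3*2^0)) by push_cast; ring]
      push_cast
      ring
    · unfold sfreq gridY
      rw [show (4:ℕ)^0 = 1 from rfl, show (2:ℕ)^0 = 1 from rfl,
        Finset.sum_range_one, Finset.sum_range_one, svdc]
      simp only [sctr]
      rw [show (a+h + a + (a+h))/3 = a + (3*((0:ℕ):ℝ)+2)*(h/(3*2^0)) by push_cast; ring]
      push_cast
      ring
  | succ k ih =>
    intro a h b
    have hX := fun a' h' => (ih a' h' b).1
    have hY := fun a' h' => (ih a' h' b).2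
    have h2k : (2:ℝ)^k ≠ 0 := by positivity
    have key1 : ∀ m : ℕ, a + (3*(m:ℝ)+1) * (h / (3*2^(k+1)))
        = a + (3*m+1) * (h/2/(3*2^k)) := by
      intro m; rw [show (2:ℝ)^(k+1) = 2*2^k by ring]; field_simp
    have key2 : ∀ m : ℕ, a + (3*(m:ℝ)+2) * (h / (3*2^(k+1)))
        = a + (3*m+2) * (h/2/(3*2^k)) := by
      intro m; rw [show (2:ℝ)^(k+1) = 2*2^k by ring]; field_simp
    have key3 : ∀ m : ℕ, a + (3*((2^k+m : ℕ):ℝ)+1) * (h / (3*2^(k+1)))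
        = (a + h/2) + (3*m+1) * (h/2/(3*2^k)) := by
      intro m; push_cast; rw [show (2:ℝ)^(k+1) = 2*2^k by ring]; field_simp; ring
    have key4 : ∀ m : ℕ, a + (3*((2^k+m : ℕ):ℝ)+2) * (h / (3*2^(k+1)))
        = (a + h/2) + (3*m+2) * (h/2/(3*2^k)) := by
      intro m; push_cast; rw [show (2:ℝ)^(k+1) = 2*2^k by ring]; field_simp; ring
    constructor
    · rw [sfreq_succ, ssub_X0, ssub_X1, ssub_X2, ssub_X3,
        hY a (h/2), hX a (h/2), hX (a + h/2) (h/2)]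
      unfold gridX gridY
      rw [show (2:ℕ)^(k+1) = 2^k + 2^k by ring, Finset.sum_range_add,
        ← Finset.sum_add_distrib, ← Finset.sum_add_distrib, ← Finset.sum_add_distrib,
        ← Finset.sum_add_distrib]
      refine Finset.sum_congr rfl fun m _ => ?_
      rw [key1 m, key2 m, key3 m, key4 m]
      push_cast
      ring
    · rw [sfreq_succ, ssub_Y0, ssub_Y1, ssub_Y2, ssub_Y3,
        hX (a + h/2) (h/2), hY (a + h/2) (h/2), hY a (h/2)]
      unfold gridX gridY
      rw [show (2:ℕ)^(k+1) = 2^k + 2^k by ring, Finset.sum_range_add,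
        ← Finset.sum_add_distrib, ← Finset.sum_add_distrib, ← Finset.sum_add_distrib,
        ← Finset.sum_add_distrib]
      refine Finset.sum_congr rfl fun m _ => ?_
      rw [key1 m, key2 m, key3 m, key4 m]
      push_cast
      ring

end SGRID

noncomputable section SFINAL
open Finset

lemma sum_sub_id (K : ℕ) (r : ℕ) :
    ∑ m ∈ Finset.range r, ((K:ℝ) - m) = r*K - r*(r-1)/2 := by
  induction r with
  | zero => simp
  | succ r ih => rw [Finset.sum_range_succ, ih]; push_cast; ring

lemma sum_sub_id' (K : ℕ) (r : ℕ) :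
    ∑ m ∈ Finset.range r, ((K:ℝ) - m - 1) = r*K - r*(r+1)/2 := by
  induction r with
  | zero => simp
  | succ r ih => rw [Finset.sum_range_succ, ih]; push_cast; ring

lemma svdc_lb (k : ℕ) (i : ℕ) (hi : i < 4^k) :
    1/(3*2^k) ≤ svdc ((0:ℝ), (1:ℝ), (0:ℝ)) i := by
  have h0 : ((0:ℝ), (1:ℝ), (0:ℝ)) = ((0:ℝ), (0:ℝ)+(1:ℝ), (0:ℝ)) := by norm_num
  by_contra hlt
  push_neg at hlt
  have hT : (0:ℝ) < 3*2^k := by positivity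
  have hgrid := (sfreq_grid k 0 1 (1/(3*2^k))).1
  have hzero : gridX (2^k) 0 (1/(3*2^k)) (1/(3*2^k)) = 0 := by
    unfold gridX
    refine Finset.sum_eq_zero fun m _ => ?_
    have c1 : ¬ ((0:ℝ) + (3*m+1)*(1/(3*2^k)) < 1/(3*2^k)) := by
      push_neg
      rw [zero_add]
      have hm : (0:ℝ) ≤ 3*(m:ℝ) := by positivity
      nlinarith [one_div_pos.2 hT]
    have c2 : ¬ ((0:ℝ) + (3*m+2)*(1/(3*2^k)) < 1/(3*2^k)) := by
      push_neg
      rw [zero_add]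
      have hm : (0:ℝ) ≤ 3*(m:ℝ) := by positivity
      nlinarith [one_div_pos.2 hT]
    unfold cnt01
    rw [if_neg c1, if_neg c2]
    ring
  have hfz : sfreq ((0:ℝ), (0:ℝ)+(1:ℝ), (0:ℝ)) k (1/(3*2^k)) = 0 := by
    rw [hgrid, hzero]
  have hterm : ∀ j ∈ Finset.range (4^k), (0:ℝ) ≤ cnt01 (svdc ((0:ℝ), (0:ℝ)+(1:ℝ), (0:ℝ)) j) (1/(3*2^k)) := by
    intro j _; unfold cnt01; split <;> norm_num
  have := (Finset.sum_eq_zero_iff_of_nonneg hterm).1 hfz i (Finset.mem_range.2 hi)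
  rw [← h0] at this
  unfold cnt01 at this
  rw [if_pos hlt] at this
  norm_num at this

lemma oneD (k : ℕ) (b : ℝ) (hb0 : 0 < b) (hb1 : b ≤ 1) :
    |(2*b - b^2) - sfreq ((0:ℝ), (1:ℝ), (0:ℝ)) k b / 4^k|
      ≤ 2/(3*2^k) - 1/(9*4^k) := by
  have h0 : ((0:ℝ), (1:ℝ), (0:ℝ)) = ((0:ℝ), (0:ℝ)+(1:ℝ), (0:ℝ)) := by norm_num
  have hKR : (0:ℝ) < 2^k := by positivity
  set T : ℝ := 3*2^k with hT
  have hT0 : (0:ℝ) < T := by positivity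
  -- the integer q with q < b*T ≤ q+1
  set q : ℕ := ⌈b*T⌉₊ - 1 with hqdef
  have hceil : 0 < ⌈b*T⌉₊ := Nat.ceil_pos.2 (by positivity)
  have hq2 : b*T ≤ (q:ℝ)+1 := by
    have : ((q:ℕ):ℝ)+1 = ((⌈b*T⌉₊ : ℕ):ℝ) := by
      rw [hqdef]; push_cast [Nat.cast_sub (by omega : 1 ≤ ⌈b*T⌉₊)]; ring
    rw [this]; exact Nat.le_ceil _
  have hq1 : (q:ℝ) < b*T := by
    have : q < ⌈b*T⌉₊ := by omega
    exact Nat.lt_ceil.1 this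
  have hq3 : q+1 ≤ 3*2^k := by
    have h1 : ⌈b*T⌉₊ ≤ 3*2^k := by
      apply Nat.ceil_le.2
      push_cast
      nlinarith
    omega
  set r₁ : ℕ := (q+2)/3 with hr₁
  set r₂ : ℕ := (q+1)/3 with hr₂
  have hr₁K : r₁ ≤ 2^k := by omega
  have hr₂K : r₂ ≤ 2^k := by omega
  -- closed form of the count
  have hcount : sfreq ((0:ℝ), (1:ℝ), (0:ℝ)) k b
      = ((r₁:ℝ)*(2^k:ℕ) - r₁*(r₁-1)/2) + ((r₂:ℝ)*(2^k:ℕ) - r₂*(r₂+1)/2) := by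
    rw [h0, (sfreq_grid k 0 1 b).1]
    unfold gridX
    have step : ∀ m ∈ Finset.range (2^k),
        ((((2^k:ℕ)):ℝ) - m) * cnt01 (0 + (3*m+1)*(1/(3*2^k))) b
          + ((((2^k:ℕ)):ℝ) - m - 1) * cnt01 (0 + (3*m+2)*(1/(3*2^k))) b
        = (if m < r₁ then (((2^k:ℕ)):ℝ) - m else 0)
          + (if m < r₂ then (((2^k:ℕ)):ℝ) - m - 1 else 0) := by
      intro m _
      have c1 : ((0:ℝ) + (3*m+1)*(1/(3*2^k)) < b) ↔ m < r₁ := by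
        rw [zero_add, show (3*(m:ℝ)+1)*(1/(3*2^k)) = (3*(m:ℝ)+1)/T by rw [hT]; ring,
          div_lt_iff₀ hT0]
        constructor
        · intro hlt
          have : (3*(m:ℝ)+1) < (q:ℝ)+1 := lt_of_lt_of_le hlt hq2
          have : ((3*m+1 : ℕ):ℝ) < ((q+1 : ℕ):ℝ) := by push_cast; linarith
          have := Nat.cast_lt.1 this
          omega
        · intro hlt
          have hle : 3*m+1 ≤ q := by omega
          have : ((3*m+1:ℕ):ℝ) ≤ (q:ℝ) := Nat.cast_le.2 hle
          push_cast at this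
          linarith
      have c2 : ((0:ℝ) + (3*m+2)*(1/(3*2^k)) < b) ↔ m < r₂ := by
        rw [zero_add, show (3*(m:ℝ)+2)*(1/(3*2^k)) = (3*(m:ℝ)+2)/T by rw [hT]; ring,
          div_lt_iff₀ hT0]
        constructor
        · intro hlt
          have : (3*(m:ℝ)+2) < (q:ℝ)+1 := lt_of_lt_of_le hlt hq2
          have : ((3*m+2 : ℕ):ℝ) < ((q+1 : ℕ):ℝ) := by push_cast; linarith
          have := Nat.cast_lt.1 this
          omega
        · intro hlt
          have hle : 3*m+2 ≤ q := by omega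
          have : ((3*m+2:ℕ):ℝ) ≤ (q:ℝ) := Nat.cast_le.2 hle
          push_cast at this
          linarith
      unfold cnt01
      rw [if_congr c1 rfl rfl, if_congr c2 rfl rfl]
      split <;> split <;> ring
    rw [Finset.sum_congr rfl step, Finset.sum_add_distrib, ← Finset.sum_filter,
      ← Finset.sum_filter,
      show (Finset.range (2^k)).filter (fun m => m < r₁) = Finset.range r₁ by
        ext m; simp only [Finset.mem_filter, Finset.mem_range]; omega,
      show (Finset.range (2^k)).filter (fun m => m < r₂) = Finset.range r₂ by
        ext m; simp only [Finset.mem_filter, Finset.mem_range]; omega,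
      sum_sub_id, sum_sub_id']
  -- generic reduction to polynomial inequalities
  have h4 : (4:ℝ)^k = ((2:ℝ)^k)^2 := by
    rw [show (4:ℝ) = 2^2 by norm_num, ← pow_mul, mul_comm, pow_mul]
  have hU : ∀ X : ℝ, (2*b - b^2)*(9*((2:ℝ)^k)^2) ≤ 6*2^k - 1 + 9*X →
      (2*b - b^2) - X/(4:ℝ)^k ≤ 2/(3*2^k) - 1/(9*(4:ℝ)^k) := by
    intro X hX
    rw [← sub_nonneg]
    have hre : 2/(3*(2:ℝ)^k) - 1/(9*(4:ℝ)^k) - ((2*b - b^2) - X/(4:ℝ)^k)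
        = (6*2^k - 1 + 9*X - (2*b - b^2)*(9*((2:ℝ)^k)^2))/(9*((2:ℝ)^k)^2) := by
      rw [h4]; field_simp; ring
    rw [hre]
    exact div_nonneg (by linarith) (by positivity)
  have hL : ∀ X : ℝ, 9*X ≤ (2*b - b^2)*(9*((2:ℝ)^k)^2) + (6*2^k - 1) →
      X/(4:ℝ)^k - (2*b - b^2) ≤ 2/(3*2^k) - 1/(9*(4:ℝ)^k) := by
    intro X hX
    rw [← sub_nonneg]
    have hre : 2/(3*(2:ℝ)^k) - 1/(9*(4:ℝ)^k) - (X/(4:ℝ)^k - (2*b - b^2))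
        = ((2*b - b^2)*(9*((2:ℝ)^k)^2) + (6*2^k - 1) - 9*X)/(9*((2:ℝ)^k)^2) := by
      rw [h4]; field_simp; ring
    rw [hre]
    exact div_nonneg (by linarith) (by positivity)
  -- arithmetic facts
  rw [hT] at hq1 hq2
  have hq3R : (q:ℝ) + 1 ≤ 3*2^k := by
    have := (Nat.cast_le (α := ℝ)).2 hq3
    push_cast at this
    linarith
  obtain ⟨r, s, hs3, hqrs⟩ : ∃ r s, s < 3 ∧ q = 3*r+s := ⟨q/3, q%3, by omega, by omega⟩
  rw [hqrs] at hq1 hq2 hq3R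
  push_cast at hq1 hq2 hq3R
  have hrKR : (r:ℝ) + 1 ≤ 2^k := by
    have hn : r + 1 ≤ 2^k := by omega
    have := (Nat.cast_le (α := ℝ)).2 hn
    push_cast at this
    linarith
  have hKR1 : (1:ℝ) ≤ 2^k := by exact_mod_cast Nat.one_le_two_pow (n := k)
  have hr0 : (0:ℝ) ≤ r := Nat.cast_nonneg r
  have hu : (0:ℝ) ≤ ((3*(r:ℝ)+s+1) - b*(3*2^k)) * ((6*2^k - (3*(r:ℝ)+s+1)) - b*(3*2^k)) := by
    apply mul_nonneg <;> linarith
  have hl : (0:ℝ) ≤ (b*(3*2^k) - (3*(r:ℝ)+s)) * ((6*2^k - (3*(r:ℝ)+s)) - b*(3*2^k)) := by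
    apply mul_nonneg <;> linarith
  rw [abs_le]
  have hMeq : -(2/(3*(2:ℝ)^k) - 1/(9*(4:ℝ)^k)) ≤ (2*b - b^2) - sfreq ((0:ℝ), (1:ℝ), (0:ℝ)) k b / 4^k ↔
      sfreq ((0:ℝ), (1:ℝ), (0:ℝ)) k b / 4^k - (2*b - b^2) ≤ 2/(3*(2:ℝ)^k) - 1/(9*(4:ℝ)^k) := by
    constructor <;> intro hh <;> linarith
  constructor
  · rw [hMeq]
    interval_cases s
    · have h1 : r₁ = r := by omega
      have h2 : r₂ = r := by omega
      rw [hcount, h1, h2]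
      apply hL
      push_cast
      push_cast at hu hl
      linarith [hl, hrKR, hKR1, hr0]
    · have h1 : r₁ = r + 1 := by omega
      have h2 : r₂ = r := by omega
      rw [hcount, h1, h2]
      apply hL
      push_cast
      push_cast at hu hl
      linarith [hl, hrKR, hKR1, hr0]
    · have h1 : r₁ = r + 1 := by omega
      have h2 : r₂ = r + 1 := by omega
      rw [hcount, h1, h2]
      apply hL
      push_cast
      push_cast at hu hl
      linarith [hl, hrKR, hKR1, hr0]
  · interval_cases s
    · have h1 : r₁ = r := by omega
      have h2 : r₂ = r := by omega
      rw [hcount, h1, h2]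
      apply hU
      push_cast
      push_cast at hu hl
      linarith [hu, hrKR, hKR1, hr0]
    · have h1 : r₁ = r + 1 := by omega
      have h2 : r₂ = r := by omega
      rw [hcount, h1, h2]
      apply hU
      push_cast
      push_cast at hu hl
      linarith [hu, hrKR, hKR1, hr0]
    · have h1 : r₁ = r + 1 := by omega
      have h2 : r₂ = r + 1 := by omega
      rw [hcount, h1, h2]
      apply hU
      push_cast
      push_cast at hu hl
      linarith [hu, hrKR, hKR1, hr0]

end SFINAL

noncomputable section GEO

/-- determinant of the triangle -/
def detT (A B C : Pt) : ℝ := (A.1-C.1)*(B.2-C.2) - (A.2-C.2)*(B.1-C.1)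

/-- first barycentric coordinate (toward `A`) -/
def sigf (A B C : Pt) (x : Pt) : ℝ :=
  ((x.1-C.1)*(B.2-C.2) - (x.2-C.2)*(B.1-C.1))/detT A B C

/-- second barycentric coordinate (toward `B`) -/
def tauf (A B C : Pt) (x : Pt) : ℝ :=
  ((x.2-C.2)*(A.1-C.1) - (x.1-C.1)*(A.2-C.2))/detT A B C

lemma vadd_char (r : ℝ) (u c p : Pt) :
    p = r • u +ᵥ c ↔ p.1 = r*u.1 + c.1 ∧ p.2 = r*u.2 + c.2 := by
  rw [show r • u +ᵥ c = r • u + c from rfl, Prod.ext_iff]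
  simp [Prod.fst_add, Prod.snd_add, Prod.smul_fst, Prod.smul_snd, smul_eq_mul]

lemma nondeg_detT {A B C : Pt} (h : Nondeg A B C) : detT A B C ≠ 0 := by
  intro hdet
  apply h
  rw [collinear_iff_exists_forall_eq_smul_vadd]
  have hd : (A.1-C.1)*(B.2-C.2) - (A.2-C.2)*(B.1-C.1) = 0 := hdet
  by_cases hu : A - C = 0
  · refine ⟨C, B - C, ?_⟩
    intro p hp
    simp only [Set.mem_insert_iff, Set.mem_singleton_iff] at hp
    rcases hp with h1 | h1 | h1
    · refine ⟨0, ?_⟩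
      rw [h1, show A = C from sub_eq_zero.1 hu, vadd_char]
      norm_num
    · exact ⟨1, by rw [h1, vadd_char]; simp [Prod.fst_sub, Prod.snd_sub]⟩
    · exact ⟨0, by rw [h1, vadd_char]; norm_num⟩
  · refine ⟨C, A - C, ?_⟩
    intro p hp
    simp only [Set.mem_insert_iff, Set.mem_singleton_iff] at hp
    rcases hp with h1 | h1 | h1
    · exact ⟨1, by rw [h1, vadd_char]; simp [Prod.fst_sub, Prod.snd_sub]⟩
    · by_cases ha1 : A.1 - C.1 = 0
      · have ha2 : A.2 - C.2 ≠ 0 := by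
          intro h3
          apply hu
          have e1 : (A - C).1 = 0 := by rw [Prod.fst_sub]; exact ha1
          have e2 : (A - C).2 = 0 := by rw [Prod.snd_sub]; exact h3
          exact Prod.ext e1 e2
        have hb1 : B.1 - C.1 = 0 := by
          have h5 : (A.2-C.2)*(B.1-C.1) = 0 := by
            rw [ha1] at hd
            linarith
          exact (mul_eq_zero.1 h5).resolve_left ha2
        refine ⟨(B.2-C.2)/(A.2-C.2), ?_⟩
        rw [h1, vadd_char, Prod.fst_sub, Prod.snd_sub]
        constructor
        · rw [ha1]
          simp
          linarith
        · field_simp; ring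
      · refine ⟨(B.1-C.1)/(A.1-C.1), ?_⟩
        rw [h1, vadd_char, Prod.fst_sub, Prod.snd_sub]
        constructor
        · field_simp; ring
        · field_simp
          first
          | linear_combination hd
          | linear_combination -hd
          | nlinarith [hd]
    · exact ⟨0, by rw [h1, vadd_char]; norm_num⟩

variable {A B C : Pt}

lemma sigf_combo (p q : ℝ) (hpq : p + q = 1) (x y : Pt) :
    sigf A B C (p • x + q • y) = p * sigf A B C x + q * sigf A B C y := by
  have hq : q = 1 - p := by linarith
  subst hq
  unfold sigf
  simp only [Prod.fst_add, Prod.snd_add, Prod.smul_fst, Prod.smul_snd, smul_eq_mul]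
  ring

lemma tauf_combo (p q : ℝ) (hpq : p + q = 1) (x y : Pt) :
    tauf A B C (p • x + q • y) = p * tauf A B C x + q * tauf A B C y := by
  have hq : q = 1 - p := by linarith
  subst hq
  unfold tauf
  simp only [Prod.fst_add, Prod.snd_add, Prod.smul_fst, Prod.smul_snd, smul_eq_mul]
  ring

lemma tauf_mid (P Q : Pt) :
    tauf A B C (mid P Q) = (tauf A B C P + tauf A B C Q)/2 := by
  unfold tauf mid
  simp only [Prod.fst_add, Prod.snd_add, Prod.smul_fst, Prod.smul_snd, smul_eq_mul]
  ring

lemma tauf_ctr (T : Tri2) :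
    tauf A B C (ctr T) = (tauf A B C T.1 + tauf A B C T.2.1 + tauf A B C T.2.2)/3 := by
  unfold tauf ctr
  simp only [Prod.fst_add, Prod.snd_add, Prod.smul_fst, Prod.smul_snd, smul_eq_mul]
  ring

lemma combo_eval (hd : detT A B C ≠ 0) (s t : ℝ) :
    sigf A B C (C + s • (A-C) + t • (B-C)) = s
    ∧ tauf A B C (C + s • (A-C) + t • (B-C)) = t := by
  unfold sigf tauf detT at *
  constructor <;>
  · simp only [Prod.fst_add, Prod.snd_add, Prod.smul_fst, Prod.smul_snd, smul_eq_mul,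
      Prod.fst_sub, Prod.snd_sub]
    rw [div_eq_iff hd]
    ring

lemma recon (hd : detT A B C ≠ 0) (x : Pt) :
    x = C + sigf A B C x • (A-C) + tauf A B C x • (B-C) := by
  unfold sigf tauf detT at *
  apply Prod.ext <;>
  · simp only [Prod.fst_add, Prod.snd_add, Prod.smul_fst, Prod.smul_snd, smul_eq_mul,
      Prod.fst_sub, Prod.snd_sub]
    rw [div_mul_eq_mul_div, div_mul_eq_mul_div, add_assoc, ← add_div, add_div' _ _ _ hd, eq_div_iff hd]
    ring

lemma sigf_vA (hd : detT A B C ≠ 0) : sigf A B C A = 1 := by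
  unfold sigf
  rw [show (A.1-C.1)*(B.2-C.2) - (A.2-C.2)*(B.1-C.1) = detT A B C from rfl, div_self hd]

lemma sigf_vB : sigf A B C B = 0 := by
  unfold sigf
  rw [div_eq_zero_iff]
  left; ring

lemma sigf_vC : sigf A B C C = 0 := by
  unfold sigf
  rw [div_eq_zero_iff]
  left; ring

lemma tauf_vA : tauf A B C A = 0 := by
  unfold tauf
  rw [div_eq_zero_iff]
  left; ring

lemma tauf_vB (hd : detT A B C ≠ 0) : tauf A B C B = 1 := by
  unfold tauf
  rw [show (B.2-C.2)*(A.1-C.1) - (B.1-C.1)*(A.2-C.2) = detT A B C by unfold detT; ring,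
    div_self hd]

lemma tauf_vC : tauf A B C C = 0 := by
  unfold tauf
  rw [div_eq_zero_iff]
  left; ring

lemma mem_parlg_iff (hd : detT A B C ≠ 0) (a b : ℝ) (x : Pt) :
    x ∈ parlg A B C a b ↔
      0 ≤ sigf A B C x ∧ sigf A B C x < a ∧ 0 ≤ tauf A B C x ∧ tauf A B C x < b := by
  constructor
  · rintro ⟨s, t, hs0, hsa, ht0, htb, rfl⟩
    rw [(combo_eval hd s t).1, (combo_eval hd s t).2]
    exact ⟨hs0, hsa, ht0, htb⟩
  · rintro ⟨h1, h2, h3, h4⟩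
    exact ⟨sigf A B C x, tauf A B C x, h1, h2, h3, h4, recon hd x⟩

lemma combo_mem_triangle {α β γ : ℝ} (ha : 0 ≤ α) (hb : 0 ≤ β) (hc : 0 ≤ γ)
    (hs : α + β + γ = 1) (P Q R : Pt) :
    α • P + β • Q + γ • R ∈ triangle P Q R := by
  have hP : P ∈ triangle P Q R := subset_convexHull ℝ _ (by simp)
  have hQ : Q ∈ triangle P Q R := subset_convexHull ℝ _ (by simp)
  have hR : R ∈ triangle P Q R := subset_convexHull ℝ _ (by simp)
  have hconv : Convex ℝ (triangle P Q R) := convex_convexHull ℝ _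
  by_cases hab : α + β = 0
  · have hα : α = 0 := by linarith
    have hβ : β = 0 := by linarith
    have hγ : γ = 1 := by linarith
    rw [hα, hβ, hγ]
    simpa using hR
  · have hab' : 0 < α + β := lt_of_le_of_ne (by linarith) (Ne.symm hab)
    have hq : (α/(α+β)) • P + (β/(α+β)) • Q ∈ triangle P Q R :=
      hconv hP hQ (by positivity) (by positivity) (by field_simp)
    have := hconv hq hR (le_of_lt hab') hc (by linarith)
    have heq : (α+β) • ((α/(α+β)) • P + (β/(α+β)) • Q) + γ • R = α • P + β • Q + γ • R := by
      rw [smul_add, smul_smul, smul_smul]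
      rw [mul_div_cancel₀ _ hab, mul_div_cancel₀ _ hab]
    rwa [heq] at this

lemma mem_triangle_iff (hd : detT A B C ≠ 0) (x : Pt) :
    x ∈ triangle A B C ↔
      0 ≤ sigf A B C x ∧ 0 ≤ tauf A B C x ∧ sigf A B C x + tauf A B C x ≤ 1 := by
  constructor
  · intro hx
    have hsub : triangle A B C ⊆
        {y : Pt | 0 ≤ sigf A B C y ∧ 0 ≤ tauf A B C y ∧ sigf A B C y + tauf A B C y ≤ 1} := by
      apply convexHull_min
      · intro p hp
        simp only [Set.mem_insert_iff, Set.mem_singleton_iff] at hp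
        rcases hp with rfl | rfl | rfl
        · rw [Set.mem_setOf_eq, sigf_vA hd, tauf_vA]
          norm_num
        · rw [Set.mem_setOf_eq, sigf_vB, tauf_vB hd]
          norm_num
        · rw [Set.mem_setOf_eq, sigf_vC, tauf_vC]
          norm_num
      · intro y hy z hz p q hp hq hpq
        rw [Set.mem_setOf_eq, sigf_combo p q hpq, tauf_combo p q hpq]
        rcases hy with ⟨hy1, hy2, hy3⟩
        rcases hz with ⟨hz1, hz2, hz3⟩
        refine ⟨by positivity, by positivity, by nlinarith⟩
    exact hsub hx
  · rintro ⟨h1, h2, h3⟩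
    have heq : x = sigf A B C x • A + tauf A B C x • B
        + (1 - sigf A B C x - tauf A B C x) • C := by
      conv_lhs => rw [recon hd x]
      apply Prod.ext <;>
      · simp only [Prod.fst_add, Prod.snd_add, Prod.smul_fst, Prod.smul_snd, smul_eq_mul,
          Prod.fst_sub, Prod.snd_sub]
        ring
    rw [heq]
    exact combo_mem_triangle h1 h2 (by linarith) (by ring) A B C

lemma ctr_mem_triSet (T : Tri2) : ctr T ∈ triSet T := by
  have h : ctr T = (3⁻¹:ℝ) • T.1 + (3⁻¹:ℝ) • T.2.1 + (3⁻¹:ℝ) • T.2.2 := by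
    unfold ctr
    apply Prod.ext <;>
      simp only [Prod.fst_add, Prod.snd_add, Prod.smul_fst, Prod.smul_snd, smul_eq_mul] <;> ring
  rw [h]
  exact combo_mem_triangle (by norm_num) (by norm_num) (by norm_num) (by norm_num) _ _ _

lemma mid_mem_triSet (T : Tri2) (P Q : Pt) (hP : P ∈ triSet T) (hQ : Q ∈ triSet T) :
    mid P Q ∈ triSet T := by
  have hconv : Convex ℝ (triSet T) := convex_convexHull ℝ _
  have h : mid P Q = (2⁻¹:ℝ) • P + (2⁻¹:ℝ) • Q := by
    unfold mid
    apply Prod.ext <;>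
      simp only [Prod.fst_add, Prod.snd_add, Prod.smul_fst, Prod.smul_snd, smul_eq_mul] <;> ring
  rw [h]
  exact hconv hP hQ (by norm_num) (by norm_num) (by norm_num)

lemma subdiv_subset (T : Tri2) (d : ℕ) : triSet (subdiv T d) ⊆ triSet T := by
  have h1 : T.1 ∈ triSet T := subset_convexHull ℝ _ (by simp [triSet, triangle])
  have h2 : T.2.1 ∈ triSet T := subset_convexHull ℝ _ (by simp [triSet, triangle])
  have h3 : T.2.2 ∈ triSet T := subset_convexHull ℝ _ (by simp [triSet, triangle])
  have key : ∀ U : Tri2, U.1 ∈ triSet T → U.2.1 ∈ triSet T → U.2.2 ∈ triSet T →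
      triSet U ⊆ triSet T := by
    intro U hU1 hU2 hU3
    apply convexHull_min _ (convex_convexHull ℝ _)
    intro p hp
    rcases hp with rfl | rfl | rfl
    exacts [hU1, hU2, hU3]
  unfold subdiv
  split
  · exact key _ (mid_mem_triSet T _ _ h2 h3) (mid_mem_triSet T _ _ h1 h3)
      (mid_mem_triSet T _ _ h1 h2)
  split
  · exact key _ h1 (mid_mem_triSet T _ _ h1 h2) (mid_mem_triSet T _ _ h1 h3)
  split
  · exact key _ (mid_mem_triSet T _ _ h1 h2) h2 (mid_mem_triSet T _ _ h2 h3)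
  · exact key _ (mid_mem_triSet T _ _ h1 h3) (mid_mem_triSet T _ _ h2 h3) h3

lemma vdc_mem_triSet (i : ℕ) : ∀ T : Tri2, vdc T i ∈ triSet T := by
  induction i using Nat.strong_induction_on with
  | _ i ih =>
    intro T
    rw [vdc]
    split
    · exact ctr_mem_triSet T
    · next h =>
      exact subdiv_subset T (i % 4)
        (ih (i/4) (Nat.div_lt_self (Nat.pos_of_ne_zero h) (by norm_num)) _)

lemma tauf_subdiv (T : Tri2) (d : ℕ) :
    (tauf A B C (subdiv T d).1, tauf A B C (subdiv T d).2.1, tauf A B C (subdiv T d).2.2)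
    = ssub (tauf A B C T.1, tauf A B C T.2.1, tauf A B C T.2.2) d := by
  obtain ⟨P, Q, R⟩ := T
  by_cases h0 : d = 0
  · subst h0
    have e1 : subdiv (P,Q,R) 0 = (mid Q R, mid P R, mid P Q) := by simp [subdiv]
    have e2 : ssub (tauf A B C P, tauf A B C Q, tauf A B C R) 0
        = ((tauf A B C Q + tauf A B C R)/2, (tauf A B C P + tauf A B C R)/2,
           (tauf A B C P + tauf A B C Q)/2) := by simp [ssub]
    rw [e1, e2]
    exact Prod.ext (tauf_mid Q R) (Prod.ext (tauf_mid P R) (tauf_mid P Q))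
  by_cases h1 : d = 1
  · subst h1
    have e1 : subdiv (P,Q,R) 1 = (P, mid P Q, mid P R) := by simp [subdiv]
    have e2 : ssub (tauf A B C P, tauf A B C Q, tauf A B C R) 1
        = (tauf A B C P, (tauf A B C P + tauf A B C Q)/2,
           (tauf A B C P + tauf A B C R)/2) := by simp [ssub]
    rw [e1, e2]
    exact Prod.ext rfl (Prod.ext (tauf_mid P Q) (tauf_mid P R))
  by_cases h2 : d = 2
  · subst h2
    have e1 : subdiv (P,Q,R) 2 = (mid P Q, Q, mid Q R) := by simp [subdiv]
    have e2 : ssub (tauf A B C P, tauf A B C Q, tauf A B C R) 2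
        = ((tauf A B C P + tauf A B C Q)/2, tauf A B C Q,
           (tauf A B C Q + tauf A B C R)/2) := by simp [ssub]
    rw [e1, e2]
    exact Prod.ext (tauf_mid P Q) (Prod.ext rfl (tauf_mid Q R))
  · have e1 : subdiv (P,Q,R) d = (mid P R, mid Q R, R) := by simp [subdiv, h0, h1, h2]
    have e2 : ssub (tauf A B C P, tauf A B C Q, tauf A B C R) d
        = ((tauf A B C P + tauf A B C R)/2, (tauf A B C Q + tauf A B C R)/2,
           tauf A B C R) := by simp [ssub, h0, h1, h2]
    rw [e1, e2]
    exact Prod.ext (tauf_mid P R) (Prod.ext (tauf_mid Q R) rfl)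

lemma tauf_vdc (i : ℕ) : ∀ T : Tri2,
    tauf A B C (vdc T i) = svdc (tauf A B C T.1, tauf A B C T.2.1, tauf A B C T.2.2) i := by
  induction i using Nat.strong_induction_on with
  | _ i ih =>
    intro T
    rw [vdc, svdc]
    by_cases hi : i = 0
    · rw [dif_pos hi, dif_pos hi, tauf_ctr]
      rfl
    · rw [dif_neg hi, dif_neg hi,
        ih (i/4) (Nat.div_lt_self (Nat.pos_of_ne_zero hi) (by norm_num)) _, tauf_subdiv]

end GEO
noncomputable section MTEST


def Lmap (u v : Pt) : Pt →ₗ[ℝ] Pt where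
  toFun p := (p.1 * u.1 + p.2 * v.1, p.1 * u.2 + p.2 * v.2)
  map_add' p q := by
    apply Prod.ext <;> simp [Prod.fst_add, Prod.snd_add] <;> ring
  map_smul' c p := by
    apply Prod.ext <;> simp [Prod.smul_fst, Prod.smul_snd, smul_eq_mul] <;> ring

lemma Lmap_det (u v : Pt) : LinearMap.det (Lmap u v) = u.1*v.2 - u.2*v.1 := by
  rw [← LinearMap.det_toMatrix (Module.Basis.finTwoProd ℝ), Matrix.det_fin_two]
  simp [LinearMap.toMatrix_apply, Lmap]
  ring

example (s : Set Pt) (f : Pt →ₗ[ℝ] Pt) :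
    volume (f '' s) = ENNReal.ofReal |LinearMap.det f| * volume s :=
  Measure.addHaar_image_linearMap volume f s

example (c : Pt) (s : Set Pt) : volume ((fun x => c + x) ⁻¹' s) = volume s :=
  measure_preimage_add volume c s

end MTEST


noncomputable section SLICE

def stdTri : Set Pt := {p : Pt | 0 ≤ p.1 ∧ 0 ≤ p.2 ∧ p.1 + p.2 ≤ 1}

def stdStrip (b : ℝ) : Set Pt :=
  {p : Pt | 0 ≤ p.1 ∧ 0 ≤ p.2 ∧ p.1 + p.2 ≤ 1 ∧ p.2 < b ∧ p.1 < 1}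

lemma measurable_stdStrip (b : ℝ) : MeasurableSet (stdStrip b) := by
  unfold stdStrip
  apply MeasurableSet.inter
  · exact measurableSet_le measurable_const measurable_fst
  apply MeasurableSet.inter
  · exact measurableSet_le measurable_const measurable_snd
  apply MeasurableSet.inter
  · exact measurableSet_le (measurable_fst.add measurable_snd) measurable_const
  apply MeasurableSet.inter
  · exact measurableSet_lt measurable_snd measurable_const
  · exact measurableSet_lt measurable_fst measurable_const

lemma volume_stdStrip (b : ℝ) (hb0 : 0 < b) (hb1 : b ≤ 1) :
    volume (stdStrip b) = ENNReal.ofReal (b - b^2/2) := by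
  have hslice : ∀ y : ℝ, volume ((fun x => (x, y)) ⁻¹' stdStrip b)
      = (Set.Ico (0:ℝ) b).indicator (fun y => ENNReal.ofReal (1 - y)) y := by
    intro y
    by_cases hy : y ∈ Set.Ico (0:ℝ) b
    · obtain ⟨hy0, hyb⟩ := hy
      have hy1 : y < 1 := lt_of_lt_of_le hyb hb1
      have sub1 : Set.Ico (0:ℝ) (1 - y) ⊆ (fun x => (x, y)) ⁻¹' stdStrip b := by
        intro x hx
        obtain ⟨hx0, hx1⟩ := hx
        simp only [Set.mem_preimage, stdStrip, Set.mem_setOf_eq]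
        exact ⟨hx0, hy0, by linarith, hyb, by linarith⟩
      have sub2 : (fun x => (x, y)) ⁻¹' stdStrip b ⊆ Set.Icc (0:ℝ) (1 - y) := by
        intro x hx
        simp only [Set.mem_preimage, stdStrip, Set.mem_setOf_eq] at hx
        obtain ⟨hx0, _, hx1, _, _⟩ := hx
        exact Set.mem_Icc.2 ⟨hx0, by linarith⟩
      rw [Set.indicator_of_mem (Set.mem_Ico.2 ⟨hy0, hyb⟩)]
      refine le_antisymm ?_ ?_
      · calc volume ((fun x => (x, y)) ⁻¹' stdStrip b) ≤ volume (Set.Icc (0:ℝ) (1-y)) :=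
              measure_mono sub2
          _ = ENNReal.ofReal (1 - y) := by rw [Real.volume_Icc]; norm_num
      · calc ENNReal.ofReal (1 - y) = volume (Set.Ico (0:ℝ) (1-y)) := by
              rw [Real.volume_Ico]; norm_num
          _ ≤ _ := measure_mono sub1
    · rw [Set.indicator_of_notMem hy]
      have : (fun x => (x, y)) ⁻¹' stdStrip b = ∅ := by
        ext x
        simp only [Set.mem_preimage, Set.mem_empty_iff_false, iff_false]
        intro hx
        simp only [stdStrip, Set.mem_setOf_eq] at hx
        obtain ⟨_, hy0, _, hyb, _⟩ := hx
        exact hy ⟨hy0, hyb⟩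
      rw [this, measure_empty]
  rw [Measure.volume_eq_prod ℝ ℝ, Measure.prod_apply_symm (measurable_stdStrip b)]
  simp_rw [hslice]
  rw [lintegral_indicator measurableSet_Ico]
  rw [← ofReal_integral_eq_lintegral_ofReal]
  · congr 1
    rw [MeasureTheory.integral_Ico_eq_integral_Ioo, ← MeasureTheory.integral_Ioc_eq_integral_Ioo, ← intervalIntegral.integral_of_le hb0.le]
    rw [intervalIntegral.integral_sub intervalIntegrable_const intervalIntegral.intervalIntegrable_id]
    rw [intervalIntegral.integral_const, integral_id]
    simp
    try ring
  · apply IntegrableOn.mono_set (t := Set.Icc (0:ℝ) b)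
    · exact (continuous_const.sub continuous_id).integrableOn_Icc
    · exact Set.Ico_subset_Icc_self
  · filter_upwards [ae_restrict_mem measurableSet_Ico] with y hy
    have : y < b := hy.2
    simp only [Pi.zero_apply]
    linarith

end SLICE

noncomputable section VOLS
open MeasureTheory

lemma volume_singleton_pt (x : Pt) : volume ({x} : Set Pt) = 0 := by
  have h : ({x} : Set Pt) = ({x.1} : Set ℝ) ×ˢ ({x.2} : Set ℝ) := by
    ext p
    simp [Set.mem_prod, Prod.ext_iff]
  rw [h, Measure.volume_eq_prod ℝ ℝ, Measure.prod_prod, Real.volume_singleton]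
  simp

lemma volume_stdTri : volume stdTri = ENNReal.ofReal (1/2) := by
  have h1 : stdStrip 1 ⊆ stdTri := by
    intro p hp
    obtain ⟨h1, h2, h3, _, _⟩ := hp
    exact ⟨h1, h2, h3⟩
  have h2 : stdTri ⊆ stdStrip 1 ∪ ({((0:ℝ),(1:ℝ))} ∪ {((1:ℝ),(0:ℝ))} : Set Pt) := by
    intro p hp
    obtain ⟨ha, hb, hc⟩ := hp
    by_cases hx : p.1 < 1
    · by_cases hy : p.2 < 1
      · exact Or.inl ⟨ha, hb, hc, hy, hx⟩
      · push_neg at hy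
        have e2 : p.2 = 1 := le_antisymm (by linarith) hy
        have e1 : p.1 = 0 := le_antisymm (by linarith) ha
        exact Or.inr (Or.inl (by rw [Set.mem_singleton_iff]; exact Prod.ext e1 e2))
    · push_neg at hx
      have e1 : p.1 = 1 := le_antisymm (by linarith) hx
      have e2 : p.2 = 0 := le_antisymm (by linarith) hb
      exact Or.inr (Or.inr (by rw [Set.mem_singleton_iff]; exact Prod.ext e1 e2))
  refine le_antisymm ?_ ?_
  · calc volume stdTri ≤ volume (stdStrip 1 ∪ ({((0:ℝ),(1:ℝ))} ∪ {((1:ℝ),(0:ℝ))} : Set Pt)) :=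
        measure_mono h2
      _ ≤ volume (stdStrip 1) + volume (({((0:ℝ),(1:ℝ))} ∪ {((1:ℝ),(0:ℝ))} : Set Pt)) :=
        measure_union_le _ _
      _ ≤ volume (stdStrip 1) + (volume ({((0:ℝ),(1:ℝ))} : Set Pt)
            + volume ({((1:ℝ),(0:ℝ))} : Set Pt)) := by
        gcongr
        exact measure_union_le _ _
      _ = ENNReal.ofReal (1/2) := by
        rw [volume_singleton_pt, volume_singleton_pt, volume_stdStrip 1 one_pos le_rfl]
        norm_num
  · rw [show ENNReal.ofReal (1/2) = volume (stdStrip 1) by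
      rw [volume_stdStrip 1 one_pos le_rfl]; norm_num]
    exact measure_mono h1

variable {A B C : Pt}

lemma Fmap_eq' (p : Pt) :
    C + Lmap (A-C) (B-C) p = C + p.1 • (A-C) + p.2 • (B-C) := by
  apply Prod.ext <;>
    simp [Lmap, Prod.fst_add, Prod.snd_add, Prod.smul_fst, Prod.smul_snd, smul_eq_mul] <;>
    ring

lemma img_tri (hd : detT A B C ≠ 0) :
    triangle A B C = (fun p => C + Lmap (A-C) (B-C) p) '' stdTri := by
  ext x
  constructor
  · intro hx
    obtain ⟨h1, h2, h3⟩ := (mem_triangle_iff hd x).1 hx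
    refine ⟨(sigf A B C x, tauf A B C x), ⟨h1, h2, h3⟩, ?_⟩
    dsimp only
    rw [Fmap_eq']
    exact (recon hd x).symm
  · rintro ⟨p, hp, rfl⟩
    obtain ⟨h1, h2, h3⟩ := hp
    dsimp only
    rw [Fmap_eq', mem_triangle_iff hd, (combo_eval hd p.1 p.2).1, (combo_eval hd p.1 p.2).2]
    exact ⟨h1, h2, h3⟩

lemma img_strip (hd : detT A B C ≠ 0) (b : ℝ) :
    parlg A B C 1 b ∩ triangle A B C = (fun p => C + Lmap (A-C) (B-C) p) '' stdStrip b := by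
  ext x
  constructor
  · rintro ⟨hP, hT⟩
    obtain ⟨h1, h2, h3, h4⟩ := (mem_parlg_iff hd 1 b x).1 hP
    obtain ⟨_, _, h5⟩ := (mem_triangle_iff hd x).1 hT
    refine ⟨(sigf A B C x, tauf A B C x), ⟨h1, h3, h5, h4, h2⟩, ?_⟩
    dsimp only
    rw [Fmap_eq']
    exact (recon hd x).symm
  · rintro ⟨p, hp, rfl⟩
    obtain ⟨h1, h2, h3, h4, h5⟩ := hp
    have e1 := (combo_eval (A := A) (B := B) (C := C) hd p.1 p.2).1
    have e2 := (combo_eval (A := A) (B := B) (C := C) hd p.1 p.2).2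
    constructor
    · dsimp only
      rw [Fmap_eq', mem_parlg_iff hd, e1, e2]
      exact ⟨h1, h5, h2, h4⟩
    · dsimp only
      rw [Fmap_eq', mem_triangle_iff hd, e1, e2]
      exact ⟨h1, h2, h3⟩

lemma Lmap_det' : LinearMap.det (Lmap (A-C) (B-C)) = detT A B C := by
  rw [Lmap_det]
  unfold detT
  simp [Prod.fst_sub, Prod.snd_sub]

lemma vol_image (S : Set Pt) :
    volume ((fun p => C + Lmap (A-C) (B-C) p) '' S)
      = ENNReal.ofReal |detT A B C| * volume S := by
  have h : (fun p => C + Lmap (A-C) (B-C) p) '' S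
      = (fun y => C + y) '' (Lmap (A-C) (B-C) '' S) := by
    rw [← Set.image_comp]
    rfl
  rw [h]
  have h2 : (fun y => C + y) '' (Lmap (A-C) (B-C) '' S)
      = (fun y => -C + y) ⁻¹' (Lmap (A-C) (B-C) '' S) := by
    ext z
    simp only [Set.mem_image, Set.mem_preimage]
    constructor
    · rintro ⟨y, hy, rfl⟩
      simpa using hy
    · intro hz
      exact ⟨-C + z, hz, by abel⟩
  rw [h2, measure_preimage_add, Measure.addHaar_image_linearMap, Lmap_det']

lemma vol_triangle (hd : detT A B C ≠ 0) :
    vol (triangle A B C) = |detT A B C| * (1/2) := by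
  unfold vol
  rw [img_tri hd, vol_image, volume_stdTri, ← ENNReal.ofReal_mul (abs_nonneg _),
    ENNReal.toReal_ofReal (by positivity)]

lemma vol_strip (hd : detT A B C ≠ 0) (b : ℝ) (hb0 : 0 < b) (hb1 : b ≤ 1) :
    vol (parlg A B C 1 b ∩ triangle A B C) = |detT A B C| * (b - b^2/2) := by
  unfold vol
  have hbb : 0 ≤ b - b^2/2 := by nlinarith
  rw [img_strip hd, vol_image, volume_stdStrip b hb0 hb1,
    ← ENNReal.ofReal_mul (abs_nonneg _),
    ENNReal.toReal_ofReal (by positivity)]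

end VOLS

/-- for `N = 4^k`, `k ≥ 1`, the supremum over `0 < b ≤ 1` of the absolute
signed discrepancy of the first `N` triangular van der Corput points at the full-width
strips `𝒯_{1,b,C} ∩ Ω` equals `2/(3√N) - 1/(9N)`. -/
theorem sup_strip_sdisc_eq (A B C : Pt) (h : Nondeg A B C) (k : ℕ) (hk : 1 ≤ k) :
    (⨆ b ∈ Set.Ioc (0:ℝ) 1,
        |sdisc (parlg A B C 1 b ∩ triangle A B C)
          (fun i : Fin (4 ^ k) => vdc (A, B, C) (i : ℕ)) (triangle A B C)|)
      = 2 / (3 * Real.sqrt ((4 : ℝ) ^ k)) - 1 / (9 * (4 : ℝ) ^ k) := by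
  have hd := nondeg_detT h
  have h4 : (4:ℝ)^k = ((2:ℝ)^k)^2 := by
    rw [show (4:ℝ) = 2^2 by norm_num, ← pow_mul, mul_comm, pow_mul]
  have hsqrt : Real.sqrt ((4:ℝ)^k) = 2^k := by
    rw [h4, Real.sqrt_sq (by positivity)]
  rw [hsqrt]
  set M : ℝ := 2 / (3 * (2:ℝ)^k) - 1 / (9 * (4:ℝ)^k) with hM
  have h2k1 : (1:ℝ) ≤ 2^k := by exact_mod_cast Nat.one_le_two_pow (n := k)
  have habs : |detT A B C| ≠ 0 := abs_ne_zero.2 hd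
  have habs' : (0:ℝ) < |detT A B C| := abs_pos.2 hd
  -- the signed discrepancy formula
  have hsd : ∀ b : ℝ, 0 < b → b ≤ 1 →
      sdisc (parlg A B C 1 b ∩ triangle A B C)
        (fun i : Fin (4 ^ k) => vdc (A, B, C) (i : ℕ)) (triangle A B C)
      = (2*b - b^2) - sfreq ((0:ℝ), (1:ℝ), (0:ℝ)) k b / 4^k := by
    intro b hb0 hb1
    unfold sdisc
    have hSS : parlg A B C 1 b ∩ triangle A B C ∩ triangle A B C
        = parlg A B C 1 b ∩ triangle A B C := by
      rw [Set.inter_assoc, Set.inter_self]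
    rw [hSS, vol_strip hd b hb0 hb1, vol_triangle hd]
    -- counting part
    have hmem : ∀ i : ℕ, i < 4^k →
        ((vdc (A,B,C) i ∈ parlg A B C 1 b ∩ triangle A B C) ↔ svdc ((0:ℝ),(1:ℝ),(0:ℝ)) i < b) := by
      intro i hi
      have htri : vdc (A,B,C) i ∈ triangle A B C := vdc_mem_triSet i (A,B,C)
      have hτ : tauf A B C (vdc (A,B,C) i) = svdc ((0:ℝ),(1:ℝ),(0:ℝ)) i := by
        rw [tauf_vdc]
        congr 1
        exact Prod.ext tauf_vA (Prod.ext (tauf_vB hd) tauf_vC)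
      have hτlb : 1/(3*2^k) ≤ tauf A B C (vdc (A,B,C) i) := by
        rw [hτ]; exact svdc_lb k i hi
      have hτpos : 0 < tauf A B C (vdc (A,B,C) i) :=
        lt_of_lt_of_le (by positivity) hτlb
      obtain ⟨hσ0, hτ0', hστ⟩ := (mem_triangle_iff hd _).1 htri
      constructor
      · rintro ⟨hP, _⟩
        have := ((mem_parlg_iff hd 1 b _).1 hP).2.2.2
        rw [← hτ]; exact this
      · intro hlt
        refine ⟨(mem_parlg_iff hd 1 b _).2 ⟨hσ0, by linarith, hτ0', by rw [hτ]; exact hlt⟩, htri⟩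
    have hcard : ((Nat.card {i : Fin (4^k) //
        (fun i : Fin (4 ^ k) => vdc (A, B, C) (i : ℕ)) i ∈ parlg A B C 1 b ∩ triangle A B C}) : ℝ)
        = sfreq ((0:ℝ),(1:ℝ),(0:ℝ)) k b := by
      classical
      rw [Nat.card_eq_fintype_card, Fintype.card_subtype, Finset.card_filter]
      rw [Fin.sum_univ_eq_sum_range
        (fun i : ℕ => if vdc (A,B,C) i ∈ parlg A B C 1 b ∩ triangle A B C then (1:ℕ) else 0)]
      unfold sfreq
      rw [Nat.cast_sum]
      refine Finset.sum_congr rfl fun i hi => ?_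
      rw [if_congr (hmem i (Finset.mem_range.1 hi)) rfl rfl]
      unfold cnt01
      split <;> simp
    rw [hcard]
    have hcast : ((4^k : ℕ) : ℝ) = (4:ℝ)^k := by push_cast; ring
    rw [hcast]
    congr 1
    have hbb2 : (0:ℝ) < 1/2 := by norm_num
    field_simp
  -- value at the minimum point
  set b₀ : ℝ := 1/(3*2^k) with hb₀
  have hb₀0 : 0 < b₀ := by positivity
  have hb₀1 : b₀ ≤ 1 := by
    rw [hb₀, div_le_one (by positivity)]
    linarith
  have hfz : sfreq ((0:ℝ), (1:ℝ), (0:ℝ)) k b₀ = 0 := by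
    have h0 : ((0:ℝ), (1:ℝ), (0:ℝ)) = ((0:ℝ), (0:ℝ)+(1:ℝ), (0:ℝ)) := by norm_num
    rw [h0, (sfreq_grid k 0 1 b₀).1]
    unfold gridX
    refine Finset.sum_eq_zero fun m _ => ?_
    have hT : (0:ℝ) < 3*2^k := by positivity
    have c1 : ¬ ((0:ℝ) + (3*m+1)*(1/(3*2^k)) < b₀) := by
      push_neg
      rw [hb₀, zero_add]
      have hm : (0:ℝ) ≤ 3*(m:ℝ) := by positivity
      nlinarith [one_div_pos.2 hT]
    have c2 : ¬ ((0:ℝ) + (3*m+2)*(1/(3*2^k)) < b₀) := by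
      push_neg
      rw [hb₀, zero_add]
      have hm : (0:ℝ) ≤ 3*(m:ℝ) := by positivity
      nlinarith [one_div_pos.2 hT]
    unfold cnt01
    rw [if_neg c1, if_neg c2]
    ring
  have hattain : sdisc (parlg A B C 1 b₀ ∩ triangle A B C)
      (fun i : Fin (4 ^ k) => vdc (A, B, C) (i : ℕ)) (triangle A B C) = M := by
    rw [hsd b₀ hb₀0 hb₀1, hfz, hM, hb₀, h4]
    field_simp
    ring
  have hM0 : (0:ℝ) ≤ M := by
    rw [hM, h4]
    have e : 2 / (3 * (2:ℝ)^k) - 1 / (9 * ((2:ℝ)^k)^2) = (6*2^k - 1)/(9*((2:ℝ)^k)^2) := by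
      field_simp; ring
    rw [e]
    apply div_nonneg _ (by positivity)
    linarith
  have hMattain : |sdisc (parlg A B C 1 b₀ ∩ triangle A B C)
      (fun i : Fin (4 ^ k) => vdc (A, B, C) (i : ℕ)) (triangle A B C)| = M := by
    rw [hattain, abs_of_nonneg hM0]
  have hbound : ∀ b : ℝ, (⨆ _ : b ∈ Set.Ioc (0:ℝ) 1,
      |sdisc (parlg A B C 1 b ∩ triangle A B C)
        (fun i : Fin (4 ^ k) => vdc (A, B, C) (i : ℕ)) (triangle A B C)|) ≤ M := by
    intro b
    apply Real.iSup_le _ hM0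
    intro hb
    rw [hsd b hb.1 hb.2, hM]
    exact oneD k b hb.1 hb.2
  refine le_antisymm (Real.iSup_le hbound hM0) ?_
  have hb₀mem : b₀ ∈ Set.Ioc (0:ℝ) 1 := ⟨hb₀0, hb₀1⟩
  have hbdd : BddAbove (Set.range fun b : ℝ => ⨆ _ : b ∈ Set.Ioc (0:ℝ) 1,
      |sdisc (parlg A B C 1 b ∩ triangle A B C)
        (fun i : Fin (4 ^ k) => vdc (A, B, C) (i : ℕ)) (triangle A B C)|) := by
    refine ⟨M, ?_⟩
    rintro x ⟨b, rfl⟩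
    exact hbound b
  have hstep := le_ciSup hbdd b₀
  rw [ciSup_pos hb₀mem, hMattain] at hstep
  exact hstep
end

section
/- For any integer k ≥ 0 and N = 4^k, and any nondegenerate triangle T ⊂ ℝ², the map i ↦ f_T(i) restricted to {0, 1, …, N−1} is a bijection onto the set of centroids of the N congruent subtriangles of the standard level-k subdivision of T; in particular, each of those N subtriangles contains exactly one of the points f_T(0), …, f_T(N−1), namely its centroid. -/
open MeasureTheory Filter Real

noncomputable section AuxVdC

namespace VdCAux

def cross (P Q : Pt) : ℝ := P.1 * Q.2 - P.2 * Q.1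

def crossT (T : Tri2) : ℝ := cross (T.2.1 - T.1) (T.2.2 - T.1)

def NdegT (T : Tri2) : Prop := Nondeg T.1 T.2.1 T.2.2

def lin (a b c : ℝ) (x : Pt) : ℝ := a * x.1 + b * x.2 + c

lemma lin_mid (a b c : ℝ) (P Q : Pt) :
    lin a b c (mid P Q) = (lin a b c P + lin a b c Q) / 2 := by
  simp [lin, mid]; ring

lemma lin_smul (s a b c : ℝ) (x : Pt) :
    lin (s * a) (s * b) (s * c) x = s * lin a b c x := by
  simp [lin]; ring

lemma lin_ctr (a b c : ℝ) (S : Tri2) :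
    lin a b c (ctr S) = (lin a b c S.1 + lin a b c S.2.1 + lin a b c S.2.2) / 3 := by
  simp [lin, ctr]; ring

lemma collinear_iff_cross (A B C : Pt) :
    Collinear ℝ ({A, B, C} : Set Pt) ↔ cross (B - A) (C - A) = 0 := by
  rw [collinear_iff_of_mem (Set.mem_insert A {B, C})]
  constructor
  · rintro ⟨v, hv⟩
    obtain ⟨rb, hb⟩ := hv B (by simp)
    obtain ⟨rc, hc⟩ := hv C (by simp)
    have hb' : B - A = rb • v := by rw [hb]; rw [vadd_eq_add]; abel
    have hc' : C - A = rc • v := by rw [hc]; rw [vadd_eq_add]; abel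
    rw [hb', hc']
    simp [cross]
    ring
  · intro hcr
    have hcr' : (B.1 - A.1) * (C.2 - A.2) - (B.2 - A.2) * (C.1 - A.1) = 0 := by
      simpa [cross] using hcr
    by_cases hBA : B = A
    · refine ⟨C - A, ?_⟩
      rintro p hp
      simp only [Set.mem_insert_iff, Set.mem_singleton_iff] at hp
      rcases hp with rfl | rfl | rfl
      · exact ⟨0, by simp [vadd_eq_add]⟩
      · exact ⟨0, by simp [vadd_eq_add, hBA]⟩
      · exact ⟨1, by simp [vadd_eq_add]⟩
    · refine ⟨B - A, ?_⟩
      have hkey : ∃ r : ℝ, C = r • (B - A) +ᵥ A := by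
        by_cases h1 : B.1 - A.1 = 0
        · have h2 : B.2 - A.2 ≠ 0 := by
            intro h2
            exact hBA (Prod.ext (by linarith) (by linarith))
          refine ⟨(C.2 - A.2) / (B.2 - A.2), ?_⟩
          have hC1 : C.1 - A.1 = 0 := by
            have h0 : (B.2 - A.2) * (C.1 - A.1) = 0 := by
              linear_combination -hcr' + (C.2 - A.2) * h1
            rcases mul_eq_zero.mp h0 with h | h
            · exact absurd h h2
            · exact h
          rw [vadd_eq_add, Prod.ext_iff]
          constructor
          · simp only [Prod.fst_add, Prod.smul_fst, smul_eq_mul, Prod.fst_sub]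
            rw [h1, mul_zero]; linarith [hC1]
          · simp only [Prod.snd_add, Prod.smul_snd, smul_eq_mul, Prod.snd_sub]
            field_simp; ring
        · refine ⟨(C.1 - A.1) / (B.1 - A.1), ?_⟩
          rw [vadd_eq_add, Prod.ext_iff]
          constructor
          · simp only [Prod.fst_add, Prod.smul_fst, smul_eq_mul, Prod.fst_sub]
            field_simp; ring
          · simp only [Prod.snd_add, Prod.smul_snd, smul_eq_mul, Prod.snd_sub]
            field_simp
            nlinarith [hcr']
      rintro p hp
      simp only [Set.mem_insert_iff, Set.mem_singleton_iff] at hp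
      rcases hp with rfl | rfl | rfl
      · exact ⟨0, by simp [vadd_eq_add]⟩
      · exact ⟨1, by simp [vadd_eq_add]⟩
      · exact hkey

lemma ndeg_iff (T : Tri2) : NdegT T ↔ crossT T ≠ 0 :=
  not_congr (collinear_iff_cross T.1 T.2.1 T.2.2)

lemma subdiv0 (T : Tri2) : subdiv T 0 = (mid T.2.1 T.2.2, mid T.1 T.2.2, mid T.1 T.2.1) := rfl
lemma subdiv1 (T : Tri2) : subdiv T 1 = (T.1, mid T.1 T.2.1, mid T.1 T.2.2) := rfl
lemma subdiv2 (T : Tri2) : subdiv T 2 = (mid T.1 T.2.1, T.2.1, mid T.2.1 T.2.2) := rfl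
lemma subdiv3 (T : Tri2) : subdiv T 3 = (mid T.1 T.2.2, mid T.2.1 T.2.2, T.2.2) := rfl

lemma crossT_subdiv (T : Tri2) (d : ℕ) : crossT (subdiv T d) = crossT T / 4 := by
  obtain ⟨A, B, C⟩ := T
  by_cases h0 : d = 0
  · subst h0; simp [subdiv0, crossT, cross, mid, Prod.ext_iff]; ring
  by_cases h1 : d = 1
  · subst h1; simp [subdiv1, crossT, cross, mid, Prod.ext_iff]; ring
  by_cases h2 : d = 2
  · subst h2; simp [subdiv2, crossT, cross, mid, Prod.ext_iff]; ring
  · have : subdiv (A, B, C) d = (mid A C, mid B C, C) := by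
      simp [subdiv, h0, h1, h2]
    rw [this]; simp [crossT, cross, mid, Prod.ext_iff]; ring

lemma ndeg_subdiv (T : Tri2) (hT : NdegT T) (d : ℕ) : NdegT (subdiv T d) := by
  rw [ndeg_iff] at *
  rw [crossT_subdiv]
  exact div_ne_zero hT (by norm_num)

lemma ctr_subdiv_zero (T : Tri2) : ctr (subdiv T 0) = ctr T := by
  obtain ⟨A, B, C⟩ := T
  simp [subdiv0, ctr, mid, Prod.ext_iff]
  constructor <;> ring

lemma vdc_zero (T : Tri2) : vdc T 0 = ctr T := by rw [vdc]; simp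

lemma vdc_rec (T : Tri2) (i : ℕ) : vdc T i = vdc (subdiv T (i % 4)) (i / 4) := by
  by_cases h : i = 0
  · subst h
    simp only [Nat.zero_mod, Nat.zero_div, vdc_zero, ctr_subdiv_zero]
  · rw [vdc]; simp [h]

lemma ctr_mem (S : Tri2) : ctr S ∈ triSet S := by
  obtain ⟨P, Q, R⟩ := S
  have hconv := convex_convexHull ℝ ({P, Q, R} : Set Pt)
  have hP : P ∈ convexHull ℝ ({P, Q, R} : Set Pt) := subset_convexHull _ _ (by simp)
  have hQ : Q ∈ convexHull ℝ ({P, Q, R} : Set Pt) := subset_convexHull _ _ (by simp)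
  have hR : R ∈ convexHull ℝ ({P, Q, R} : Set Pt) := subset_convexHull _ _ (by simp)
  have h1 : (2⁻¹ : ℝ) • Q + (2⁻¹ : ℝ) • R ∈ convexHull ℝ ({P, Q, R} : Set Pt) :=
    hconv hQ hR (by norm_num) (by norm_num) (by norm_num)
  have h2 : ((3 : ℝ)⁻¹) • P + (2/3 : ℝ) • ((2⁻¹ : ℝ) • Q + (2⁻¹ : ℝ) • R)
      ∈ convexHull ℝ ({P, Q, R} : Set Pt) :=
    hconv hP h1 (by norm_num) (by norm_num) (by norm_num)
  have heq : ctr (P, Q, R) = ((3 : ℝ)⁻¹) • P + (2/3 : ℝ) • ((2⁻¹ : ℝ) • Q + (2⁻¹ : ℝ) • R) := by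
    show (3⁻¹ : ℝ) • (P + Q + R) = _
    module
  show ctr (P, Q, R) ∈ convexHull ℝ ({P, Q, R} : Set Pt)
  rw [heq]; exact h2

lemma mid_mem {s : Set Pt} {P Q : Pt} (hP : P ∈ convexHull ℝ s) (hQ : Q ∈ convexHull ℝ s) :
    mid P Q ∈ convexHull ℝ s := by
  have hconv := convex_convexHull ℝ s
  have h1 : (2⁻¹ : ℝ) • P + (2⁻¹ : ℝ) • Q ∈ convexHull ℝ s :=
    hconv hP hQ (by norm_num) (by norm_num) (by norm_num)
  have : mid P Q = (2⁻¹ : ℝ) • P + (2⁻¹ : ℝ) • Q := by show (2⁻¹:ℝ) • (P + Q) = _; module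
  rw [this]; exact h1

lemma subdiv_subset (T : Tri2) (d : ℕ) : triSet (subdiv T d) ⊆ triSet T := by
  obtain ⟨A, B, C⟩ := T
  have hA : A ∈ convexHull ℝ ({A, B, C} : Set Pt) := subset_convexHull _ _ (by simp)
  have hB : B ∈ convexHull ℝ ({A, B, C} : Set Pt) := subset_convexHull _ _ (by simp)
  have hC : C ∈ convexHull ℝ ({A, B, C} : Set Pt) := subset_convexHull _ _ (by simp)
  have key : ∀ P Q R : Pt, P ∈ convexHull ℝ ({A, B, C} : Set Pt) →
      Q ∈ convexHull ℝ ({A, B, C} : Set Pt) → R ∈ convexHull ℝ ({A, B, C} : Set Pt) →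
      triSet (P, Q, R) ⊆ triSet (A, B, C) := by
    intro P Q R hP hQ hR
    apply convexHull_min _ (convex_convexHull ℝ _)
    intro x hx
    simp only [Set.mem_insert_iff, Set.mem_singleton_iff] at hx
    rcases hx with rfl | rfl | rfl <;> assumption
  by_cases h0 : d = 0
  · subst h0; rw [subdiv0]; exact key _ _ _ (mid_mem hB hC) (mid_mem hA hC) (mid_mem hA hB)
  by_cases h1 : d = 1
  · subst h1; rw [subdiv1]; exact key _ _ _ hA (mid_mem hA hB) (mid_mem hA hC)
  by_cases h2 : d = 2
  · subst h2; rw [subdiv2]; exact key _ _ _ (mid_mem hA hB) hB (mid_mem hB hC)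
  · have : subdiv (A, B, C) d = (mid A C, mid B C, C) := by simp [subdiv, h0, h1, h2]
    rw [this]; exact key _ _ _ (mid_mem hA hC) (mid_mem hB hC) hC

lemma convex_lin_le (a b c u : ℝ) : Convex ℝ {y : Pt | lin a b c y ≤ u} := by
  intro x hx y hy s t hs ht hst
  simp only [Set.mem_setOf_eq, lin] at *
  have h1 : (s • x + t • y).1 = s * x.1 + t * y.1 := by simp
  have h2 : (s • x + t • y).2 = s * x.2 + t * y.2 := by simp
  rw [h1, h2]
  have e1 : s * (a * x.1 + b * x.2 + c) ≤ s * u := mul_le_mul_of_nonneg_left hx hs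
  have e2 : t * (a * y.1 + b * y.2 + c) ≤ t * u := mul_le_mul_of_nonneg_left hy ht
  have e3 : s * u + t * u = u := by rw [← add_mul, hst, one_mul]
  have e4 : s * c + t * c = c := by rw [← add_mul, hst, one_mul]
  nlinarith [e1, e2, e3, e4]

lemma triSet_le (a b c u : ℝ) (S : Tri2) (h1 : lin a b c S.1 ≤ u) (h2 : lin a b c S.2.1 ≤ u)
    (h3 : lin a b c S.2.2 ≤ u) : ∀ x ∈ triSet S, lin a b c x ≤ u := by
  intro x hx
  have hsub : triSet S ⊆ {y | lin a b c y ≤ u} := by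
    apply convexHull_min _ (convex_lin_le a b c u)
    intro p hp
    simp only [Set.mem_insert_iff, Set.mem_singleton_iff] at hp
    rcases hp with rfl | rfl | rfl <;> assumption
  exact hsub hx

lemma lin_neg (a b c : ℝ) (x : Pt) : lin (-a) (-b) (-c) x = -(lin a b c x) := by
  simp [lin]; ring

lemma triSet_ge (a b c u : ℝ) (S : Tri2) (h1 : u ≤ lin a b c S.1) (h2 : u ≤ lin a b c S.2.1)
    (h3 : u ≤ lin a b c S.2.2) : ∀ x ∈ triSet S, u ≤ lin a b c x := by
  intro x hx
  have := triSet_le (-a) (-b) (-c) (-u) S (by rw [lin_neg]; linarith) (by rw [lin_neg]; linarith)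
    (by rw [lin_neg]; linarith) x hx
  rw [lin_neg] at this; linarith

lemma ctr_lt (a b c u : ℝ) (hab : ¬(a = 0 ∧ b = 0)) (S : Tri2) (hS : NdegT S)
    (h1 : lin a b c S.1 ≤ u) (h2 : lin a b c S.2.1 ≤ u) (h3 : lin a b c S.2.2 ≤ u) :
    lin a b c (ctr S) < u := by
  obtain ⟨P, Q, R⟩ := S
  rw [lin_ctr]
  simp only at h1 h2 h3 ⊢
  by_cases hstrict : lin a b c P = u ∧ lin a b c Q = u ∧ lin a b c R = u
  · exfalso
    obtain ⟨e1, e2, e3⟩ := hstrict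
    have hq : a * (Q.1 - P.1) + b * (Q.2 - P.2) = 0 := by
      simp only [lin] at e1 e2; linarith
    have hr : a * (R.1 - P.1) + b * (R.2 - P.2) = 0 := by
      simp only [lin] at e1 e3; linarith
    have hcr : crossT (P, Q, R) = 0 := by
      have hc : crossT (P, Q, R) =
          (Q.1 - P.1) * (R.2 - P.2) - (Q.2 - P.2) * (R.1 - P.1) := by
        simp [crossT, cross]
      have ha0 : a * ((Q.1 - P.1) * (R.2 - P.2) - (Q.2 - P.2) * (R.1 - P.1)) = 0 := by
        linear_combination (R.2 - P.2) * hq - (Q.2 - P.2) * hr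
      have hb0 : b * ((Q.1 - P.1) * (R.2 - P.2) - (Q.2 - P.2) * (R.1 - P.1)) = 0 := by
        linear_combination (P.1 - R.1) * hq + (Q.1 - P.1) * hr
      rcases not_and_or.mp hab with ha | hb
      · rw [hc]; exact (mul_eq_zero.mp ha0).resolve_left ha
      · rw [hc]; exact (mul_eq_zero.mp hb0).resolve_left hb
    exact ((ndeg_iff _).mp hS) hcr
  · have : lin a b c P < u ∨ lin a b c Q < u ∨ lin a b c R < u := by
      by_contra hcon
      push_neg at hcon
      exact hstrict ⟨le_antisymm h1 (by linarith [hcon.1]),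
        le_antisymm h2 (by linarith [hcon.2.1]), le_antisymm h3 (by linarith [hcon.2.2])⟩
    rcases this with h | h | h <;> linarith

lemma lin_subdiv_le (a b c u : ℝ) (S : Tri2) (h1 : lin a b c S.1 ≤ u) (h2 : lin a b c S.2.1 ≤ u)
    (h3 : lin a b c S.2.2 ≤ u) (d : ℕ) :
    lin a b c (subdiv S d).1 ≤ u ∧ lin a b c (subdiv S d).2.1 ≤ u ∧
      lin a b c (subdiv S d).2.2 ≤ u := by
  have hm : ∀ P Q : Pt, lin a b c P ≤ u → lin a b c Q ≤ u → lin a b c (mid P Q) ≤ u := by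
    intro P Q hP hQ; rw [lin_mid]; linarith
  by_cases h0 : d = 0
  · subst h0; rw [subdiv0]; exact ⟨hm _ _ h2 h3, hm _ _ h1 h3, hm _ _ h1 h2⟩
  by_cases hd1 : d = 1
  · subst hd1; rw [subdiv1]; exact ⟨h1, hm _ _ h1 h2, hm _ _ h1 h3⟩
  by_cases hd2 : d = 2
  · subst hd2; rw [subdiv2]; exact ⟨hm _ _ h1 h2, h2, hm _ _ h2 h3⟩
  · have : subdiv S d = (mid S.1 S.2.2, mid S.2.1 S.2.2, S.2.2) := by
      simp [subdiv, h0, hd1, hd2]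
    rw [this]; exact ⟨hm _ _ h1 h3, hm _ _ h2 h3, h3⟩

lemma vdc_lt (a b c u : ℝ) (hab : ¬(a = 0 ∧ b = 0)) :
    ∀ i (S : Tri2), NdegT S → lin a b c S.1 ≤ u → lin a b c S.2.1 ≤ u → lin a b c S.2.2 ≤ u →
      lin a b c (vdc S i) < u := by
  intro i
  induction i using Nat.strong_induction_on with
  | _ i ih =>
    intro S hS h1 h2 h3
    by_cases h : i = 0
    · subst h; rw [vdc_zero]; exact ctr_lt a b c u hab S hS h1 h2 h3
    · rw [vdc_rec]
      obtain ⟨g1, g2, g3⟩ := lin_subdiv_le a b c u S h1 h2 h3 (i % 4)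
      exact ih (i / 4) (Nat.div_lt_self (Nat.pos_of_ne_zero h) (by norm_num))
        (subdiv S (i % 4)) (ndeg_subdiv S hS (i % 4)) g1 g2 g3

lemma vdc_gt (a b c u : ℝ) (hab : ¬(a = 0 ∧ b = 0)) (i : ℕ) (S : Tri2) (hS : NdegT S)
    (h1 : u ≤ lin a b c S.1) (h2 : u ≤ lin a b c S.2.1) (h3 : u ≤ lin a b c S.2.2) :
    u < lin a b c (vdc S i) := by
  have hab' : ¬(-a = 0 ∧ -b = 0) := by
    rintro ⟨ha, hb⟩; exact hab ⟨by linarith, by linarith⟩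
  have := vdc_lt (-a) (-b) (-c) (-u) hab' i S hS (by rw [lin_neg]; linarith)
    (by rw [lin_neg]; linarith) (by rw [lin_neg]; linarith)
  rw [lin_neg] at this; linarith

lemma sepLe (a b c u : ℝ) (hab : ¬(a = 0 ∧ b = 0)) (Sd Se : Tri2) (hSd : NdegT Sd)
    (hd1 : u ≤ lin a b c Sd.1) (hd2 : u ≤ lin a b c Sd.2.1) (hd3 : u ≤ lin a b c Sd.2.2)
    (he1 : lin a b c Se.1 ≤ u) (he2 : lin a b c Se.2.1 ≤ u) (he3 : lin a b c Se.2.2 ≤ u)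
    (m : ℕ) : vdc Sd m ∉ triSet Se := by
  intro hmem
  have hgt := vdc_gt a b c u hab m Sd hSd hd1 hd2 hd3
  have hle := triSet_le a b c u Se he1 he2 he3 _ hmem
  linarith

lemma sepGe (a b c u : ℝ) (hab : ¬(a = 0 ∧ b = 0)) (Sd Se : Tri2) (hSe : NdegT Se)
    (hd1 : u ≤ lin a b c Sd.1) (hd2 : u ≤ lin a b c Sd.2.1) (hd3 : u ≤ lin a b c Sd.2.2)
    (he1 : lin a b c Se.1 ≤ u) (he2 : lin a b c Se.2.1 ≤ u) (he3 : lin a b c Se.2.2 ≤ u)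
    (m : ℕ) : vdc Se m ∉ triSet Sd := by
  intro hmem
  have hlt := vdc_lt a b c u hab m Se hSe he1 he2 he3
  have hge := triSet_ge a b c u Sd hd1 hd2 hd3 _ hmem
  linarith

lemma sepA_both (T : Tri2) (hT : NdegT T) {e : ℕ} (he : e < 4) (hne : e ≠ 1) (m : ℕ) :
    vdc (subdiv T 1) m ∉ triSet (subdiv T e) ∧ vdc (subdiv T e) m ∉ triSet (subdiv T 1) := by
  obtain ⟨A, B, C⟩ := T
  have h1T : NdegT (subdiv (A, B, C) 1) := ndeg_subdiv _ hT 1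
  have hET : NdegT (subdiv (A, B, C) e) := ndeg_subdiv _ hT e
  have hD : crossT (A, B, C) ≠ 0 := (ndeg_iff _).mp hT
  set D := crossT (A, B, C) with hDd
  have vA : lin (B.2 - C.2) (C.1 - B.1) (B.1 * C.2 - B.2 * C.1) A = D := by
    rw [hDd]; simp [lin, crossT, cross]; ring
  have vB : lin (B.2 - C.2) (C.1 - B.1) (B.1 * C.2 - B.2 * C.1) B = 0 := by
    simp [lin, crossT, cross]; ring
  have vC : lin (B.2 - C.2) (C.1 - B.1) (B.1 * C.2 - B.2 * C.1) C = 0 := by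
    simp [lin, crossT, cross]; ring
  have hab : ¬(D * (B.2 - C.2) = 0 ∧ D * (C.1 - B.1) = 0) := by
    rintro ⟨ha, hb⟩
    have ha' : (B.2 - C.2) = 0 := (mul_eq_zero.mp ha).resolve_left hD
    have hb' : (C.1 - B.1) = 0 := (mul_eq_zero.mp hb).resolve_left hD
    apply hD
    show cross (B - A) (C - A) = 0
    simp only [cross, Prod.fst_sub, Prod.snd_sub]
    linear_combination (A.1 - B.1) * ha' + (A.2 - B.2) * hb'
  have hd1 : D ^ 2 / 2 ≤ lin (D * (B.2 - C.2)) (D * (C.1 - B.1)) (D * (B.1 * C.2 - B.2 * C.1)) (A) := by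
    rw [lin_smul, vA]; nlinarith [sq_nonneg D]
  have hd2 : D ^ 2 / 2 ≤ lin (D * (B.2 - C.2)) (D * (C.1 - B.1)) (D * (B.1 * C.2 - B.2 * C.1)) (mid A B) := by
    rw [lin_smul, lin_mid, vA, vB]; nlinarith [sq_nonneg D]
  have hd3 : D ^ 2 / 2 ≤ lin (D * (B.2 - C.2)) (D * (C.1 - B.1)) (D * (B.1 * C.2 - B.2 * C.1)) (mid A C) := by
    rw [lin_smul, lin_mid, vA, vC]; nlinarith [sq_nonneg D]
  interval_cases e
  · have q1 : lin (D * (B.2 - C.2)) (D * (C.1 - B.1)) (D * (B.1 * C.2 - B.2 * C.1)) (mid B C) ≤ D ^ 2 / 2 := by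
      rw [lin_smul, lin_mid, vB, vC]; nlinarith [sq_nonneg D]
    have q2 : lin (D * (B.2 - C.2)) (D * (C.1 - B.1)) (D * (B.1 * C.2 - B.2 * C.1)) (mid A C) ≤ D ^ 2 / 2 := by
      rw [lin_smul, lin_mid, vA, vC]; nlinarith [sq_nonneg D]
    have q3 : lin (D * (B.2 - C.2)) (D * (C.1 - B.1)) (D * (B.1 * C.2 - B.2 * C.1)) (mid A B) ≤ D ^ 2 / 2 := by
      rw [lin_smul, lin_mid, vA, vB]; nlinarith [sq_nonneg D]
    exact ⟨sepLe _ _ _ _ hab _ _ h1T hd1 hd2 hd3 q1 q2 q3 m,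
      sepGe _ _ _ _ hab _ _ hET hd1 hd2 hd3 q1 q2 q3 m⟩
  · exact absurd rfl hne
  · have q1 : lin (D * (B.2 - C.2)) (D * (C.1 - B.1)) (D * (B.1 * C.2 - B.2 * C.1)) (mid A B) ≤ D ^ 2 / 2 := by
      rw [lin_smul, lin_mid, vA, vB]; nlinarith [sq_nonneg D]
    have q2 : lin (D * (B.2 - C.2)) (D * (C.1 - B.1)) (D * (B.1 * C.2 - B.2 * C.1)) (B) ≤ D ^ 2 / 2 := by
      rw [lin_smul, vB]; nlinarith [sq_nonneg D]
    have q3 : lin (D * (B.2 - C.2)) (D * (C.1 - B.1)) (D * (B.1 * C.2 - B.2 * C.1)) (mid B C) ≤ D ^ 2 / 2 := by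
      rw [lin_smul, lin_mid, vB, vC]; nlinarith [sq_nonneg D]
    exact ⟨sepLe _ _ _ _ hab _ _ h1T hd1 hd2 hd3 q1 q2 q3 m,
      sepGe _ _ _ _ hab _ _ hET hd1 hd2 hd3 q1 q2 q3 m⟩
  · have q1 : lin (D * (B.2 - C.2)) (D * (C.1 - B.1)) (D * (B.1 * C.2 - B.2 * C.1)) (mid A C) ≤ D ^ 2 / 2 := by
      rw [lin_smul, lin_mid, vA, vC]; nlinarith [sq_nonneg D]
    have q2 : lin (D * (B.2 - C.2)) (D * (C.1 - B.1)) (D * (B.1 * C.2 - B.2 * C.1)) (mid B C) ≤ D ^ 2 / 2 := by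
      rw [lin_smul, lin_mid, vB, vC]; nlinarith [sq_nonneg D]
    have q3 : lin (D * (B.2 - C.2)) (D * (C.1 - B.1)) (D * (B.1 * C.2 - B.2 * C.1)) (C) ≤ D ^ 2 / 2 := by
      rw [lin_smul, vC]; nlinarith [sq_nonneg D]
    exact ⟨sepLe _ _ _ _ hab _ _ h1T hd1 hd2 hd3 q1 q2 q3 m,
      sepGe _ _ _ _ hab _ _ hET hd1 hd2 hd3 q1 q2 q3 m⟩

lemma sepB_both (T : Tri2) (hT : NdegT T) {e : ℕ} (he : e < 4) (hne : e ≠ 2) (m : ℕ) :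
    vdc (subdiv T 2) m ∉ triSet (subdiv T e) ∧ vdc (subdiv T e) m ∉ triSet (subdiv T 2) := by
  obtain ⟨A, B, C⟩ := T
  have h1T : NdegT (subdiv (A, B, C) 2) := ndeg_subdiv _ hT 2
  have hET : NdegT (subdiv (A, B, C) e) := ndeg_subdiv _ hT e
  have hD : crossT (A, B, C) ≠ 0 := (ndeg_iff _).mp hT
  set D := crossT (A, B, C) with hDd
  have vA : lin (C.2 - A.2) (A.1 - C.1) (C.1 * A.2 - C.2 * A.1) A = 0 := by
    simp [lin, crossT, cross]; ring
  have vB : lin (C.2 - A.2) (A.1 - C.1) (C.1 * A.2 - C.2 * A.1) B = D := by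
    rw [hDd]; simp [lin, crossT, cross]; ring
  have vC : lin (C.2 - A.2) (A.1 - C.1) (C.1 * A.2 - C.2 * A.1) C = 0 := by
    simp [lin, crossT, cross]; ring
  have hab : ¬(D * (C.2 - A.2) = 0 ∧ D * (A.1 - C.1) = 0) := by
    rintro ⟨ha, hb⟩
    have ha' : (C.2 - A.2) = 0 := (mul_eq_zero.mp ha).resolve_left hD
    have hb' : (A.1 - C.1) = 0 := (mul_eq_zero.mp hb).resolve_left hD
    apply hD
    show cross (B - A) (C - A) = 0
    simp only [cross, Prod.fst_sub, Prod.snd_sub]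
    linear_combination (B.1 - A.1) * ha' + (B.2 - A.2) * hb'
  have hd1 : D ^ 2 / 2 ≤ lin (D * (C.2 - A.2)) (D * (A.1 - C.1)) (D * (C.1 * A.2 - C.2 * A.1)) (mid A B) := by
    rw [lin_smul, lin_mid, vA, vB]; nlinarith [sq_nonneg D]
  have hd2 : D ^ 2 / 2 ≤ lin (D * (C.2 - A.2)) (D * (A.1 - C.1)) (D * (C.1 * A.2 - C.2 * A.1)) (B) := by
    rw [lin_smul, vB]; nlinarith [sq_nonneg D]
  have hd3 : D ^ 2 / 2 ≤ lin (D * (C.2 - A.2)) (D * (A.1 - C.1)) (D * (C.1 * A.2 - C.2 * A.1)) (mid B C) := by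
    rw [lin_smul, lin_mid, vB, vC]; nlinarith [sq_nonneg D]
  interval_cases e
  · have q1 : lin (D * (C.2 - A.2)) (D * (A.1 - C.1)) (D * (C.1 * A.2 - C.2 * A.1)) (mid B C) ≤ D ^ 2 / 2 := by
      rw [lin_smul, lin_mid, vB, vC]; nlinarith [sq_nonneg D]
    have q2 : lin (D * (C.2 - A.2)) (D * (A.1 - C.1)) (D * (C.1 * A.2 - C.2 * A.1)) (mid A C) ≤ D ^ 2 / 2 := by
      rw [lin_smul, lin_mid, vA, vC]; nlinarith [sq_nonneg D]
    have q3 : lin (D * (C.2 - A.2)) (D * (A.1 - C.1)) (D * (C.1 * A.2 - C.2 * A.1)) (mid A B) ≤ D ^ 2 / 2 := by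
      rw [lin_smul, lin_mid, vA, vB]; nlinarith [sq_nonneg D]
    exact ⟨sepLe _ _ _ _ hab _ _ h1T hd1 hd2 hd3 q1 q2 q3 m,
      sepGe _ _ _ _ hab _ _ hET hd1 hd2 hd3 q1 q2 q3 m⟩
  · have q1 : lin (D * (C.2 - A.2)) (D * (A.1 - C.1)) (D * (C.1 * A.2 - C.2 * A.1)) (A) ≤ D ^ 2 / 2 := by
      rw [lin_smul, vA]; nlinarith [sq_nonneg D]
    have q2 : lin (D * (C.2 - A.2)) (D * (A.1 - C.1)) (D * (C.1 * A.2 - C.2 * A.1)) (mid A B) ≤ D ^ 2 / 2 := by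
      rw [lin_smul, lin_mid, vA, vB]; nlinarith [sq_nonneg D]
    have q3 : lin (D * (C.2 - A.2)) (D * (A.1 - C.1)) (D * (C.1 * A.2 - C.2 * A.1)) (mid A C) ≤ D ^ 2 / 2 := by
      rw [lin_smul, lin_mid, vA, vC]; nlinarith [sq_nonneg D]
    exact ⟨sepLe _ _ _ _ hab _ _ h1T hd1 hd2 hd3 q1 q2 q3 m,
      sepGe _ _ _ _ hab _ _ hET hd1 hd2 hd3 q1 q2 q3 m⟩
  · exact absurd rfl hne
  · have q1 : lin (D * (C.2 - A.2)) (D * (A.1 - C.1)) (D * (C.1 * A.2 - C.2 * A.1)) (mid A C) ≤ D ^ 2 / 2 := by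
      rw [lin_smul, lin_mid, vA, vC]; nlinarith [sq_nonneg D]
    have q2 : lin (D * (C.2 - A.2)) (D * (A.1 - C.1)) (D * (C.1 * A.2 - C.2 * A.1)) (mid B C) ≤ D ^ 2 / 2 := by
      rw [lin_smul, lin_mid, vB, vC]; nlinarith [sq_nonneg D]
    have q3 : lin (D * (C.2 - A.2)) (D * (A.1 - C.1)) (D * (C.1 * A.2 - C.2 * A.1)) (C) ≤ D ^ 2 / 2 := by
      rw [lin_smul, vC]; nlinarith [sq_nonneg D]
    exact ⟨sepLe _ _ _ _ hab _ _ h1T hd1 hd2 hd3 q1 q2 q3 m,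
      sepGe _ _ _ _ hab _ _ hET hd1 hd2 hd3 q1 q2 q3 m⟩

lemma sepC_both (T : Tri2) (hT : NdegT T) {e : ℕ} (he : e < 4) (hne : e ≠ 3) (m : ℕ) :
    vdc (subdiv T 3) m ∉ triSet (subdiv T e) ∧ vdc (subdiv T e) m ∉ triSet (subdiv T 3) := by
  obtain ⟨A, B, C⟩ := T
  have h1T : NdegT (subdiv (A, B, C) 3) := ndeg_subdiv _ hT 3
  have hET : NdegT (subdiv (A, B, C) e) := ndeg_subdiv _ hT e
  have hD : crossT (A, B, C) ≠ 0 := (ndeg_iff _).mp hT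
  set D := crossT (A, B, C) with hDd
  have vA : lin (A.2 - B.2) (B.1 - A.1) (A.1 * B.2 - A.2 * B.1) A = 0 := by
    simp [lin, crossT, cross]; ring
  have vB : lin (A.2 - B.2) (B.1 - A.1) (A.1 * B.2 - A.2 * B.1) B = 0 := by
    simp [lin, crossT, cross]; ring
  have vC : lin (A.2 - B.2) (B.1 - A.1) (A.1 * B.2 - A.2 * B.1) C = D := by
    rw [hDd]; simp [lin, crossT, cross]; ring
  have hab : ¬(D * (A.2 - B.2) = 0 ∧ D * (B.1 - A.1) = 0) := by
    rintro ⟨ha, hb⟩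
    have ha' : (A.2 - B.2) = 0 := (mul_eq_zero.mp ha).resolve_left hD
    have hb' : (B.1 - A.1) = 0 := (mul_eq_zero.mp hb).resolve_left hD
    apply hD
    show cross (B - A) (C - A) = 0
    simp only [cross, Prod.fst_sub, Prod.snd_sub]
    linear_combination (C.2 - A.2) * hb' + (C.1 - A.1) * ha'
  have hd1 : D ^ 2 / 2 ≤ lin (D * (A.2 - B.2)) (D * (B.1 - A.1)) (D * (A.1 * B.2 - A.2 * B.1)) (mid A C) := by
    rw [lin_smul, lin_mid, vA, vC]; nlinarith [sq_nonneg D]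
  have hd2 : D ^ 2 / 2 ≤ lin (D * (A.2 - B.2)) (D * (B.1 - A.1)) (D * (A.1 * B.2 - A.2 * B.1)) (mid B C) := by
    rw [lin_smul, lin_mid, vB, vC]; nlinarith [sq_nonneg D]
  have hd3 : D ^ 2 / 2 ≤ lin (D * (A.2 - B.2)) (D * (B.1 - A.1)) (D * (A.1 * B.2 - A.2 * B.1)) (C) := by
    rw [lin_smul, vC]; nlinarith [sq_nonneg D]
  interval_cases e
  · have q1 : lin (D * (A.2 - B.2)) (D * (B.1 - A.1)) (D * (A.1 * B.2 - A.2 * B.1)) (mid B C) ≤ D ^ 2 / 2 := by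
      rw [lin_smul, lin_mid, vB, vC]; nlinarith [sq_nonneg D]
    have q2 : lin (D * (A.2 - B.2)) (D * (B.1 - A.1)) (D * (A.1 * B.2 - A.2 * B.1)) (mid A C) ≤ D ^ 2 / 2 := by
      rw [lin_smul, lin_mid, vA, vC]; nlinarith [sq_nonneg D]
    have q3 : lin (D * (A.2 - B.2)) (D * (B.1 - A.1)) (D * (A.1 * B.2 - A.2 * B.1)) (mid A B) ≤ D ^ 2 / 2 := by
      rw [lin_smul, lin_mid, vA, vB]; nlinarith [sq_nonneg D]
    exact ⟨sepLe _ _ _ _ hab _ _ h1T hd1 hd2 hd3 q1 q2 q3 m,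
      sepGe _ _ _ _ hab _ _ hET hd1 hd2 hd3 q1 q2 q3 m⟩
  · have q1 : lin (D * (A.2 - B.2)) (D * (B.1 - A.1)) (D * (A.1 * B.2 - A.2 * B.1)) (A) ≤ D ^ 2 / 2 := by
      rw [lin_smul, vA]; nlinarith [sq_nonneg D]
    have q2 : lin (D * (A.2 - B.2)) (D * (B.1 - A.1)) (D * (A.1 * B.2 - A.2 * B.1)) (mid A B) ≤ D ^ 2 / 2 := by
      rw [lin_smul, lin_mid, vA, vB]; nlinarith [sq_nonneg D]
    have q3 : lin (D * (A.2 - B.2)) (D * (B.1 - A.1)) (D * (A.1 * B.2 - A.2 * B.1)) (mid A C) ≤ D ^ 2 / 2 := by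
      rw [lin_smul, lin_mid, vA, vC]; nlinarith [sq_nonneg D]
    exact ⟨sepLe _ _ _ _ hab _ _ h1T hd1 hd2 hd3 q1 q2 q3 m,
      sepGe _ _ _ _ hab _ _ hET hd1 hd2 hd3 q1 q2 q3 m⟩
  · have q1 : lin (D * (A.2 - B.2)) (D * (B.1 - A.1)) (D * (A.1 * B.2 - A.2 * B.1)) (mid A B) ≤ D ^ 2 / 2 := by
      rw [lin_smul, lin_mid, vA, vB]; nlinarith [sq_nonneg D]
    have q2 : lin (D * (A.2 - B.2)) (D * (B.1 - A.1)) (D * (A.1 * B.2 - A.2 * B.1)) (B) ≤ D ^ 2 / 2 := by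
      rw [lin_smul, vB]; nlinarith [sq_nonneg D]
    have q3 : lin (D * (A.2 - B.2)) (D * (B.1 - A.1)) (D * (A.1 * B.2 - A.2 * B.1)) (mid B C) ≤ D ^ 2 / 2 := by
      rw [lin_smul, lin_mid, vB, vC]; nlinarith [sq_nonneg D]
    exact ⟨sepLe _ _ _ _ hab _ _ h1T hd1 hd2 hd3 q1 q2 q3 m,
      sepGe _ _ _ _ hab _ _ hET hd1 hd2 hd3 q1 q2 q3 m⟩
  · exact absurd rfl hne

lemma sep (T : Tri2) (hT : NdegT T) {d e : ℕ} (hd : d < 4) (he : e < 4) (hde : d ≠ e)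
    (m : ℕ) : vdc (subdiv T d) m ∉ triSet (subdiv T e) := by
  by_cases h1 : d = 1
  · subst h1; exact (sepA_both T hT he (by omega) m).1
  by_cases h2 : e = 1
  · subst h2; exact (sepA_both T hT hd (by omega) m).2
  by_cases h3 : d = 2
  · subst h3; exact (sepB_both T hT he (by omega) m).1
  by_cases h4 : e = 2
  · subst h4; exact (sepB_both T hT hd (by omega) m).2
  by_cases h5 : d = 3
  · subst h5; exact (sepC_both T hT he (by omega) m).1
  by_cases h6 : e = 3
  · subst h6; exact (sepC_both T hT hd (by omega) m).2
  · exfalso; omega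

def pathTri : ℕ → Tri2 → ℕ → Tri2
  | 0, T, _ => T
  | (k+1), T, i => pathTri k (subdiv T (i % 4)) (i / 4)

lemma vdc_eq_ctr_pathTri : ∀ (k : ℕ) (T : Tri2) (i : ℕ), i < 4 ^ k →
    vdc T i = ctr (pathTri k T i) := by
  intro k
  induction k with
  | zero =>
    intro T i hi
    interval_cases i
    exact vdc_zero T
  | succ k ih =>
    intro T i hi
    rw [vdc_rec]
    have h4 : (4:ℕ) ^ (k+1) = 4 ^ k * 4 := pow_succ 4 k
    exact ih (subdiv T (i % 4)) (i / 4) (by omega)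

lemma pathTri_subset : ∀ (k : ℕ) (T : Tri2) (i : ℕ), triSet (pathTri k T i) ⊆ triSet T := by
  intro k
  induction k with
  | zero => intro T i; exact subset_rfl
  | succ k ih =>
    intro T i
    exact (ih (subdiv T (i % 4)) (i / 4)).trans (subdiv_subset T (i % 4))

lemma mem_level_of_mem_subdiv : ∀ (k : ℕ) (T : Tri2) (d : ℕ), d < 4 →
    ∀ S ∈ level (subdiv T d) k, S ∈ level T (k + 1) := by
  intro k
  induction k with
  | zero =>
    intro T d hd S hS
    rw [level] at hS
    exact ⟨T, rfl, d, hd, hS⟩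
  | succ k ih =>
    intro T d hd S hS
    obtain ⟨S', hS', e, he, rfl⟩ := hS
    exact ⟨S', ih T d hd S' hS', e, he, rfl⟩

lemma mem_subdiv_of_mem_level : ∀ (k : ℕ) (T : Tri2), ∀ S ∈ level T (k + 1),
    ∃ d < 4, S ∈ level (subdiv T d) k := by
  intro k
  induction k with
  | zero =>
    intro T S hS
    obtain ⟨S', hS', d, hd, rfl⟩ := hS
    rw [level] at hS'
    rw [Set.mem_singleton_iff] at hS'
    subst hS'
    exact ⟨d, hd, rfl⟩
  | succ k ih =>
    intro T S hS
    obtain ⟨S', hS', e, he, rfl⟩ := hS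
    obtain ⟨d, hd, hS'd⟩ := ih T S' hS'
    exact ⟨d, hd, S', hS'd, e, he, rfl⟩

lemma pathTri_mem_level : ∀ (k : ℕ) (T : Tri2) (i : ℕ), i < 4 ^ k →
    pathTri k T i ∈ level T k := by
  intro k
  induction k with
  | zero => intro T i hi; exact rfl
  | succ k ih =>
    intro T i hi
    have h4 : (4:ℕ) ^ (k+1) = 4 ^ k * 4 := pow_succ 4 k
    exact mem_level_of_mem_subdiv k T (i % 4) (Nat.mod_lt _ (by norm_num)) _
      (ih (subdiv T (i % 4)) (i / 4) (by omega))

lemma level_eq_pathTri : ∀ (k : ℕ) (T : Tri2), ∀ S ∈ level T k,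
    ∃ i < 4 ^ k, S = pathTri k T i := by
  intro k
  induction k with
  | zero =>
    intro T S hS
    rw [level, Set.mem_singleton_iff] at hS
    exact ⟨0, by norm_num, hS⟩
  | succ k ih =>
    intro T S hS
    obtain ⟨d, hd, hSd⟩ := mem_subdiv_of_mem_level k T S hS
    obtain ⟨j, hj, rfl⟩ := ih (subdiv T d) S hSd
    refine ⟨4 * j + d, ?_, ?_⟩
    · have h4 : (4:ℕ) ^ (k+1) = 4 ^ k * 4 := pow_succ 4 k
      omega
    · show pathTri k (subdiv T d) j = pathTri k (subdiv T ((4 * j + d) % 4)) ((4 * j + d) / 4)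
      have h1 : (4 * j + d) % 4 = d := by omega
      have h2 : (4 * j + d) / 4 = j := by omega
      rw [h1, h2]

lemma main : ∀ (k : ℕ) (T : Tri2), NdegT T → ∀ i j : ℕ, i < 4 ^ k → j < 4 ^ k →
    vdc T i ∈ triSet (pathTri k T j) → i = j := by
  intro k
  induction k with
  | zero => intro T _ i j hi hj _; omega
  | succ k ih =>
    intro T hT i j hi hj hmem
    have h4 : (4:ℕ) ^ (k+1) = 4 ^ k * 4 := pow_succ 4 k
    have hvi : vdc T i = vdc (subdiv T (i % 4)) (i / 4) := vdc_rec T i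
    have hmem' : vdc (subdiv T (i % 4)) (i / 4)
        ∈ triSet (pathTri k (subdiv T (j % 4)) (j / 4)) := by
      rw [← hvi]; exact hmem
    by_cases hde : i % 4 = j % 4
    · rw [hde] at hmem'
      have := ih (subdiv T (j % 4)) (ndeg_subdiv T hT (j % 4)) (i / 4) (j / 4)
        (by omega) (by omega) hmem'
      omega
    · exfalso
      have hmem'' : vdc (subdiv T (i % 4)) (i / 4) ∈ triSet (subdiv T (j % 4)) :=
        pathTri_subset k (subdiv T (j % 4)) (j / 4) hmem'
      exact sep T hT (Nat.mod_lt _ (by norm_num)) (Nat.mod_lt _ (by norm_num)) hde (i / 4) hmem''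

end VdCAux

end AuxVdC

open VdCAux

/-- for `N = 4^k`, the map `i ↦ f_T(i)` is a bijection from `{0,…,N-1}`
onto the set of centroids of the level-`k` subdivision of `T`; in particular each of
the `N` subtriangles contains exactly one of the points `f_T(0),…,f_T(N-1)`,
namely its centroid. -/
theorem vdc_bijOn_centroids (T : Tri2) (h : Nondeg T.1 T.2.1 T.2.2) (k : ℕ) :
    Set.BijOn (vdc T) (Set.Iio (4 ^ k)) (ctr '' level T k) ∧
    (∀ S ∈ level T k,
      (∃! i : ℕ, i < 4 ^ k ∧ vdc T i ∈ triSet S) ∧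
      (∀ i : ℕ, i < 4 ^ k → vdc T i ∈ triSet S → vdc T i = ctr S)) := by
  have hT : NdegT T := h
  constructor
  · refine ⟨?_, ?_, ?_⟩
    · intro i hi
      rw [Set.mem_Iio] at hi
      exact ⟨pathTri k T i, pathTri_mem_level k T i hi, (vdc_eq_ctr_pathTri k T i hi).symm⟩
    · intro i hi j hj hij
      rw [Set.mem_Iio] at hi hj
      apply main k T hT i j hi hj
      rw [hij, vdc_eq_ctr_pathTri k T j hj]
      exact ctr_mem _
    · rintro y ⟨S, hS, rfl⟩
      obtain ⟨i, hik, rfl⟩ := level_eq_pathTri k T S hS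
      exact ⟨i, Set.mem_Iio.mpr hik, vdc_eq_ctr_pathTri k T i hik⟩
  · intro S hS
    obtain ⟨j, hjk, rfl⟩ := level_eq_pathTri k T S hS
    have hctr : vdc T j = ctr (pathTri k T j) := vdc_eq_ctr_pathTri k T j hjk
    have huniq : ∀ i : ℕ, i < 4 ^ k → vdc T i ∈ triSet (pathTri k T j) → i = j :=
      fun i hik hmem => main k T hT i j hik hjk hmem
    constructor
    · refine ⟨j, ⟨hjk, ?_⟩, ?_⟩
      · rw [hctr]; exact ctr_mem _
      · rintro i ⟨hik, hmem⟩; exact huniq i hik hmem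
    · intro i hik hmem
      rw [huniq i hik hmem, hctr]
end

section
/- Let Ω = Δ(A,B,C) be a nondegenerate triangle in ℝ², k ≥ 1 an integer, N = 4^k, and consider the standard level-k subdivision of Ω into N congruent subtriangles. For any 0 < a,b ≤ 1, the number of subtriangles of the subdivision whose interior is intersected by the topological boundary of the parallelogram 𝒯_{a,b,C} is at most 2√N − 1. -/
open MeasureTheory Filter Real

noncomputable section
namespace BTaux
open Set

def mapTri (f : Pt → Pt) (T : Tri2) : Tri2 := (f T.1, f T.2.1, f T.2.2)

variable (A B C : Pt)

/-- The coordinate map. -/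
def phi (w : Pt) : Pt := C + w.1 • (A - C) + w.2 • (B - C)

lemma phi_fst (w : Pt) : (phi A B C w).1 = C.1 + w.1 * (A.1 - C.1) + w.2 * (B.1 - C.1) := by
  simp [phi]

lemma phi_snd (w : Pt) : (phi A B C w).2 = C.2 + w.1 * (A.2 - C.2) + w.2 * (B.2 - C.2) := by
  simp [phi]

def dett : ℝ := (A.1 - C.1) * (B.2 - C.2) - (B.1 - C.1) * (A.2 - C.2)

lemma det_ne (h : Nondeg A B C) : dett A B C ≠ 0 := by
  intro hD
  apply h
  rw [collinear_iff_exists_forall_eq_smul_vadd]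
  by_cases hAC : A - C = 0
  · refine ⟨C, B - C, ?_⟩
    rintro p hp
    simp only [Set.mem_insert_iff, Set.mem_singleton_iff] at hp
    rcases hp with rfl | rfl | rfl
    · exact ⟨0, by simp [sub_eq_zero.mp hAC]⟩
    · exact ⟨1, by simp⟩
    · exact ⟨0, by simp⟩
  · refine ⟨C, A - C, ?_⟩
    rintro p hp
    simp only [Set.mem_insert_iff, Set.mem_singleton_iff] at hp
    have key : ∃ r : ℝ, B = r • (A - C) +ᵥ C := by
      by_cases h1 : A.1 - C.1 ≠ 0
      · refine ⟨(B.1 - C.1) / (A.1 - C.1), ?_⟩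
        have h2 : B.2 - C.2 = (B.1 - C.1) / (A.1 - C.1) * (A.2 - C.2) := by
          field_simp
          unfold dett at hD; nlinarith [hD]
        ext
        · simp; field_simp; ring
        · simp; linarith [h2]
      · push_neg at h1
        have h2 : A.2 - C.2 ≠ 0 := by
          intro h2; apply hAC; ext <;> simp <;> linarith [h1, h2]
        have h3 : B.1 - C.1 = 0 := by
          unfold dett at hD
          rw [h1, zero_mul, zero_sub, neg_eq_zero] at hD
          have : (B.1 - C.1) * (A.2 - C.2) = 0 := hD
          rcases mul_eq_zero.mp this with h | h
          · exact h
          · exact absurd h h2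
        refine ⟨(B.2 - C.2) / (A.2 - C.2), ?_⟩
        ext
        · simp [h1]; linarith [h3]
        · simp; field_simp; ring
    rcases hp with rfl | rfl | rfl
    · exact ⟨1, by simp⟩
    · exact key
    · exact ⟨0, by simp⟩

end BTaux
end
noncomputable section
namespace BTaux
open Set

variable (A B C : Pt)

/-- Explicit inverse of `phi`. -/
def psi (x : Pt) : Pt :=
  (((B.2 - C.2) * (x.1 - C.1) - (B.1 - C.1) * (x.2 - C.2)) / dett A B C,
   (-(A.2 - C.2) * (x.1 - C.1) + (A.1 - C.1) * (x.2 - C.2)) / dett A B C)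

lemma psi_phi (hD : dett A B C ≠ 0) (w : Pt) : psi A B C (phi A B C w) = w := by
  unfold dett at hD
  ext
  · simp only [psi, phi_fst, phi_snd, dett]
    rw [div_eq_iff hD]
    ring
  · simp only [psi, phi_fst, phi_snd, dett]
    rw [div_eq_iff hD]
    ring

lemma phi_psi (hD : dett A B C ≠ 0) (x : Pt) : phi A B C (psi A B C x) = x := by
  unfold dett at hD
  ext
  · simp only [psi, phi_fst, dett]
    rw [div_mul_eq_mul_div, div_mul_eq_mul_div, add_assoc, ← add_div, add_div' _ _ _ hD, div_eq_iff hD]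
    ring
  · simp only [psi, phi_snd, dett]
    rw [div_mul_eq_mul_div, div_mul_eq_mul_div, add_assoc, ← add_div, add_div' _ _ _ hD, div_eq_iff hD]
    ring

/-- `phi` as a homeomorphism. -/
def phiHomeo (hD : dett A B C ≠ 0) : Pt ≃ₜ Pt where
  toFun := phi A B C
  invFun := psi A B C
  left_inv := psi_phi A B C hD
  right_inv := phi_psi A B C hD
  continuous_toFun := by unfold phi; fun_prop
  continuous_invFun := by unfold psi; fun_prop

lemma phi_inj (hD : dett A B C ≠ 0) : Function.Injective (phi A B C) :=
  (phiHomeo A B C hD).injective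

/-- `phi` as an affine map. -/
def phiAff : Pt →ᵃ[ℝ] Pt :=
  (AffineEquiv.constVAdd ℝ Pt C).toAffineMap.comp
    (((LinearMap.fst ℝ ℝ ℝ).smulRight (A - C) + (LinearMap.snd ℝ ℝ ℝ).smulRight (B - C)).toAffineMap)

lemma phiAff_apply (w : Pt) : phiAff A B C w = phi A B C w := by
  simp [phiAff, phi, vadd_eq_add]
  abel

lemma image_triangle (P Q R : Pt) :
    triangle (phi A B C P) (phi A B C Q) (phi A B C R)
      = phi A B C '' convexHull ℝ {P, Q, R} := by
  have hfun : ⇑(phiAff A B C) = phi A B C := funext (phiAff_apply A B C)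
  rw [triangle, ← hfun, AffineMap.image_convexHull]
  congr 1
  simp [Set.image_insert_eq]

lemma image_parlg (a b : ℝ) :
    parlg A B C a b = phi A B C '' (Set.Ico 0 a ×ˢ Set.Ico 0 b) := by
  ext x
  constructor
  · rintro ⟨s, t, hs, hs', ht, ht', rfl⟩
    exact ⟨(s, t), ⟨⟨hs, hs'⟩, ⟨ht, ht'⟩⟩, rfl⟩
  · rintro ⟨⟨s, t⟩, ⟨⟨hs, hs'⟩, ⟨ht, ht'⟩⟩, rfl⟩
    exact ⟨s, t, hs, hs', ht, ht', rfl⟩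

end BTaux
end
noncomputable section
namespace BTaux
open Set

/-- Parameter-plane cell: `u = true` is the "up" triangle with corner `(i,j)/2^k`,
`u = false` the "down" triangle with corner `((i+1),(j+1))/2^k`. -/
def pcell (k i j : ℕ) (u : Bool) : Tri2 :=
  if u then
    (((((i : ℝ) + 1) / 2 ^ k, (j : ℝ) / 2 ^ k)),
     (((i : ℝ) / 2 ^ k, ((j : ℝ) + 1) / 2 ^ k)),
     (((i : ℝ) / 2 ^ k, (j : ℝ) / 2 ^ k)))
  else
    ((((i : ℝ) / 2 ^ k, ((j : ℝ) + 1) / 2 ^ k)),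
     ((((i : ℝ) + 1) / 2 ^ k, (j : ℝ) / 2 ^ k)),
     ((((i : ℝ) + 1) / 2 ^ k, ((j : ℝ) + 1) / 2 ^ k)))

variable (A B C : Pt)

lemma mid_phi (P Q : Pt) : mid (phi A B C P) (phi A B C Q) = phi A B C (mid P Q) := by
  ext
  · simp [mid, phi_fst]; ring
  · simp [mid, phi_snd]; ring

lemma subdiv_mapTri (T : Tri2) (d : ℕ) :
    subdiv (mapTri (phi A B C) T) d = mapTri (phi A B C) (subdiv T d) := by
  rcases T with ⟨P, Q, R⟩
  unfold subdiv
  split_ifs <;> simp [mapTri, mid_phi]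

lemma pcell_up_0 (k i j : ℕ) :
    subdiv (pcell k i j true) 0 = pcell (k + 1) (2 * i) (2 * j) false := by
  simp only [pcell, subdiv, mid, if_true, if_pos, reduceIte, Prod.mk.injEq, Prod.ext_iff,
    Prod.smul_fst, Prod.smul_snd, Prod.fst_add, Prod.snd_add]
  norm_num [pow_succ]
  refine ⟨⟨?_, ?_⟩, ⟨?_, ?_⟩, ?_, ?_⟩ <;> (field_simp; ring)

end BTaux
end
noncomputable section
namespace BTaux
open Set

lemma pcell_up_1 (k i j : ℕ) :
    subdiv (pcell k i j true) 1 = pcell (k + 1) (2 * i + 1) (2 * j) true := by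
  simp only [pcell, subdiv, mid, if_true, if_pos, reduceIte, Prod.mk.injEq, Prod.ext_iff,
    Prod.smul_fst, Prod.smul_snd, Prod.fst_add, Prod.snd_add]
  norm_num [pow_succ]
  refine ⟨⟨?_, ?_⟩, ⟨?_, ?_⟩, ?_, ?_⟩ <;> (field_simp <;> ring)

lemma pcell_up_2 (k i j : ℕ) :
    subdiv (pcell k i j true) 2 = pcell (k + 1) (2 * i) (2 * j + 1) true := by
  simp only [pcell, subdiv, mid, if_true, if_pos, reduceIte, Prod.mk.injEq, Prod.ext_iff,
    Prod.smul_fst, Prod.smul_snd, Prod.fst_add, Prod.snd_add]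
  norm_num [pow_succ]
  refine ⟨⟨?_, ?_⟩, ⟨?_, ?_⟩, ?_, ?_⟩ <;> (field_simp <;> ring)

lemma pcell_up_3 (k i j : ℕ) :
    subdiv (pcell k i j true) 3 = pcell (k + 1) (2 * i) (2 * j) true := by
  simp only [pcell, subdiv, mid, if_true, if_pos, reduceIte, Prod.mk.injEq, Prod.ext_iff,
    Prod.smul_fst, Prod.smul_snd, Prod.fst_add, Prod.snd_add]
  norm_num [pow_succ]
  refine ⟨⟨?_, ?_⟩, ⟨?_, ?_⟩, ?_, ?_⟩ <;> (field_simp <;> ring)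

lemma pcell_dn_0 (k i j : ℕ) :
    subdiv (pcell k i j false) 0 = pcell (k + 1) (2 * i + 1) (2 * j + 1) true := by
  simp only [pcell, subdiv, mid, if_true, if_pos, reduceIte, Prod.mk.injEq, Prod.ext_iff,
    Prod.smul_fst, Prod.smul_snd, Prod.fst_add, Prod.snd_add]
  norm_num [pow_succ]
  refine ⟨⟨?_, ?_⟩, ⟨?_, ?_⟩, ?_, ?_⟩ <;> (field_simp; ring)

lemma pcell_dn_1 (k i j : ℕ) :
    subdiv (pcell k i j false) 1 = pcell (k + 1) (2 * i) (2 * j + 1) false := by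
  simp only [pcell, subdiv, mid, if_true, if_pos, reduceIte, Prod.mk.injEq, Prod.ext_iff,
    Prod.smul_fst, Prod.smul_snd, Prod.fst_add, Prod.snd_add]
  norm_num [pow_succ]
  refine ⟨⟨?_, ?_⟩, ⟨?_, ?_⟩, ?_, ?_⟩ <;> (field_simp <;> ring)

lemma pcell_dn_2 (k i j : ℕ) :
    subdiv (pcell k i j false) 2 = pcell (k + 1) (2 * i + 1) (2 * j) false := by
  simp only [pcell, subdiv, mid, if_true, if_pos, reduceIte, Prod.mk.injEq, Prod.ext_iff,
    Prod.smul_fst, Prod.smul_snd, Prod.fst_add, Prod.snd_add]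
  norm_num [pow_succ]
  refine ⟨⟨?_, ?_⟩, ⟨?_, ?_⟩, ?_, ?_⟩ <;> (field_simp <;> ring)

lemma pcell_dn_3 (k i j : ℕ) :
    subdiv (pcell k i j false) 3 = pcell (k + 1) (2 * i + 1) (2 * j + 1) false := by
  simp only [pcell, subdiv, mid, if_true, if_pos, reduceIte, Prod.mk.injEq, Prod.ext_iff,
    Prod.smul_fst, Prod.smul_snd, Prod.fst_add, Prod.snd_add]
  norm_num [pow_succ]
  refine ⟨⟨?_, ?_⟩, ⟨?_, ?_⟩, ?_, ?_⟩ <;> (field_simp; ring)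

end BTaux
end
noncomputable section
namespace BTaux
open Set

variable (A B C : Pt)

lemma levelA : ∀ (k : ℕ) (S : Tri2), S ∈ level (A, B, C) k →
    ∃ (i j : ℕ) (u : Bool), (cond u (i + j + 1 ≤ 2 ^ k) (i + j + 2 ≤ 2 ^ k)) ∧
      S = mapTri (phi A B C) (pcell k i j u) := by
  intro k
  induction k with
  | zero =>
    intro S hS
    simp only [level, Set.mem_singleton_iff] at hS
    refine ⟨0, 0, true, by norm_num, ?_⟩
    subst hS
    have h1 : pcell 0 0 0 true = ((1, 0), (0, 1), (0, 0)) := by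
      norm_num [pcell, Prod.ext_iff]
    rw [h1]
    simp only [mapTri]
    have e1 : phi A B C (1, 0) = A := by
      ext <;> simp [phi_fst, phi_snd] <;> ring
    have e2 : phi A B C (0, 1) = B := by
      ext <;> simp [phi_fst, phi_snd] <;> ring
    have e3 : phi A B C (0, 0) = C := by
      ext <;> simp [phi_fst, phi_snd]
    rw [e1, e2, e3]
  | succ k ih =>
    intro S hS
    simp only [level, Set.mem_setOf_eq] at hS
    obtain ⟨S', hS', d, hd, rfl⟩ := hS
    obtain ⟨i, j, u, hcon, rfl⟩ := ih S' hS'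
    rw [subdiv_mapTri]
    have h2 : (2 : ℕ) ^ (k + 1) = 2 * 2 ^ k := by ring
    rcases u with _ | _
    · -- down cell
      simp only [cond] at hcon
      interval_cases d
      · exact ⟨2 * i + 1, 2 * j + 1, true, by simp only [cond]; omega,
          by rw [pcell_dn_0]⟩
      · exact ⟨2 * i, 2 * j + 1, false, by simp only [cond]; omega,
          by rw [pcell_dn_1]⟩
      · exact ⟨2 * i + 1, 2 * j, false, by simp only [cond]; omega,
          by rw [pcell_dn_2]⟩
      · exact ⟨2 * i + 1, 2 * j + 1, false, by simp only [cond]; omega,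
          by rw [pcell_dn_3]⟩
    · -- up cell
      simp only [cond] at hcon
      interval_cases d
      · exact ⟨2 * i, 2 * j, false, by simp only [cond]; omega,
          by rw [pcell_up_0]⟩
      · exact ⟨2 * i + 1, 2 * j, true, by simp only [cond]; omega,
          by rw [pcell_up_1]⟩
      · exact ⟨2 * i, 2 * j + 1, true, by simp only [cond]; omega,
          by rw [pcell_up_2]⟩
      · exact ⟨2 * i, 2 * j, true, by simp only [cond]; omega,
          by rw [pcell_up_3]⟩

end BTaux
end
noncomputable section
namespace BTaux
open Set

lemma mem_hull3 {v1 v2 v3 x : Pt} {α β γ : ℝ} (hα : 0 ≤ α) (hβ : 0 ≤ β) (hγ : 0 ≤ γ)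
    (hsum : α + β + γ = 1) (hx : x = α • v1 + β • v2 + γ • v3) :
    x ∈ convexHull ℝ ({v1, v2, v3} : Set Pt) := by
  have hconv := convex_convexHull ℝ ({v1, v2, v3} : Set Pt)
  have key := hconv.sum_mem (t := (Finset.univ : Finset (Fin 3)))
    (w := ![α, β, γ]) (z := ![v1, v2, v3])
    (by intro i _; fin_cases i <;> simpa)
    (by simp [Fin.sum_univ_three, hsum])
    (by intro i _; fin_cases i <;> (apply subset_convexHull; simp))
  rw [Fin.sum_univ_three] at key
  simpa [hx] using key

lemma hull_up (c : Pt) (ε : ℝ) (hε : 0 < ε) :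
    convexHull ℝ ({(c.1 + ε, c.2), (c.1, c.2 + ε), c} : Set Pt)
      = {x : Pt | c.1 ≤ x.1 ∧ c.2 ≤ x.2 ∧ x.1 + x.2 ≤ c.1 + c.2 + ε} := by
  apply Set.Subset.antisymm
  · apply convexHull_min
    · rintro v hv
      simp only [Set.mem_insert_iff, Set.mem_singleton_iff] at hv
      rcases hv with rfl | rfl | rfl <;> refine ⟨?_, ?_, ?_⟩ <;> simp <;> linarith
    · rintro x ⟨hx1, hx2, hx3⟩ y ⟨hy1, hy2, hy3⟩ u v hu hv huv
      have e1 : u * c.1 + v * c.1 = c.1 := by rw [← add_mul, huv, one_mul]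
      have e2 : u * c.2 + v * c.2 = c.2 := by rw [← add_mul, huv, one_mul]
      have e3 : u * (c.1 + c.2 + ε) + v * (c.1 + c.2 + ε) = c.1 + c.2 + ε := by
        rw [← add_mul, huv, one_mul]
      refine ⟨?_, ?_, ?_⟩ <;>
        simp only [Set.mem_setOf_eq, Prod.fst_add, Prod.snd_add, Prod.smul_fst,
          Prod.smul_snd, smul_eq_mul] <;>
        nlinarith [mul_le_mul_of_nonneg_left hx1 hu, mul_le_mul_of_nonneg_left hy1 hv,
          mul_le_mul_of_nonneg_left hx2 hu, mul_le_mul_of_nonneg_left hy2 hv,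
          mul_le_mul_of_nonneg_left hx3 hu, mul_le_mul_of_nonneg_left hy3 hv]
  · rintro x ⟨h1, h2, h3⟩
    refine mem_hull3 (α := (x.1 - c.1) / ε) (β := (x.2 - c.2) / ε)
      (γ := (c.1 + c.2 + ε - x.1 - x.2) / ε) ?_ ?_ ?_ ?_ ?_
    · exact div_nonneg (by linarith) hε.le
    · exact div_nonneg (by linarith) hε.le
    · exact div_nonneg (by linarith) hε.le
    · field_simp
      ring
    · ext
      · simp only [Prod.fst_add, Prod.smul_fst, smul_eq_mul]
        field_simp
        ring
      · simp only [Prod.snd_add, Prod.smul_snd, smul_eq_mul]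
        field_simp
        ring

lemma hull_dn (c : Pt) (ε : ℝ) (hε : 0 < ε) :
    convexHull ℝ ({(c.1 - ε, c.2), (c.1, c.2 - ε), c} : Set Pt)
      = {x : Pt | x.1 ≤ c.1 ∧ x.2 ≤ c.2 ∧ c.1 + c.2 - ε ≤ x.1 + x.2} := by
  apply Set.Subset.antisymm
  · apply convexHull_min
    · rintro v hv
      simp only [Set.mem_insert_iff, Set.mem_singleton_iff] at hv
      rcases hv with rfl | rfl | rfl <;> refine ⟨?_, ?_, ?_⟩ <;> simp <;> linarith
    · rintro x ⟨hx1, hx2, hx3⟩ y ⟨hy1, hy2, hy3⟩ u v hu hv huv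
      have e1 : u * c.1 + v * c.1 = c.1 := by rw [← add_mul, huv, one_mul]
      have e2 : u * c.2 + v * c.2 = c.2 := by rw [← add_mul, huv, one_mul]
      have e3 : u * (c.1 + c.2 - ε) + v * (c.1 + c.2 - ε) = c.1 + c.2 - ε := by
        rw [← add_mul, huv, one_mul]
      refine ⟨?_, ?_, ?_⟩ <;>
        simp only [Set.mem_setOf_eq, Prod.fst_add, Prod.snd_add, Prod.smul_fst,
          Prod.smul_snd, smul_eq_mul] <;>
        nlinarith [mul_le_mul_of_nonneg_left hx1 hu, mul_le_mul_of_nonneg_left hy1 hv,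
          mul_le_mul_of_nonneg_left hx2 hu, mul_le_mul_of_nonneg_left hy2 hv,
          mul_le_mul_of_nonneg_left hx3 hu, mul_le_mul_of_nonneg_left hy3 hv]
  · rintro x ⟨h1, h2, h3⟩
    refine mem_hull3 (α := (c.1 - x.1) / ε) (β := (c.2 - x.2) / ε)
      (γ := (x.1 + x.2 - (c.1 + c.2 - ε)) / ε) ?_ ?_ ?_ ?_ ?_
    · exact div_nonneg (by linarith) hε.le
    · exact div_nonneg (by linarith) hε.le
    · exact div_nonneg (by linarith) hε.le
    · field_simp
      ring
    · ext
      · simp only [Prod.fst_add, Prod.smul_fst, smul_eq_mul]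
        field_simp
        ring
      · simp only [Prod.snd_add, Prod.smul_snd, smul_eq_mul]
        field_simp
        ring

/-- The cell of the standard subdivision as an inequality-defined set. -/
def Uset (k i j : ℕ) (u : Bool) : Set Pt :=
  if u then
    {x : Pt | (i : ℝ) / 2 ^ k ≤ x.1 ∧ (j : ℝ) / 2 ^ k ≤ x.2 ∧
      x.1 + x.2 ≤ (i : ℝ) / 2 ^ k + (j : ℝ) / 2 ^ k + 1 / 2 ^ k}
  else
    {x : Pt | x.1 ≤ ((i : ℝ) + 1) / 2 ^ k ∧ x.2 ≤ ((j : ℝ) + 1) / 2 ^ k ∧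
      ((i : ℝ) + 1) / 2 ^ k + ((j : ℝ) + 1) / 2 ^ k - 1 / 2 ^ k ≤ x.1 + x.2}

lemma hull_pcell (k i j : ℕ) (u : Bool) :
    convexHull ℝ ({(pcell k i j u).1, (pcell k i j u).2.1, (pcell k i j u).2.2} : Set Pt)
      = Uset k i j u := by
  have hε : (0 : ℝ) < 1 / 2 ^ k := by positivity
  rcases u with _ | _
  · have := hull_dn (((i : ℝ) + 1) / 2 ^ k, ((j : ℝ) + 1) / 2 ^ k) (1 / 2 ^ k) hε
    simp only [pcell, Uset, if_neg, reduceIte]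
    have e1 : ((i : ℝ) + 1) / 2 ^ k - 1 / 2 ^ k = (i : ℝ) / 2 ^ k := by ring
    have e2 : ((j : ℝ) + 1) / 2 ^ k - 1 / 2 ^ k = (j : ℝ) / 2 ^ k := by ring
    rw [e1, e2] at this
    exact this
  · have := hull_up ((i : ℝ) / 2 ^ k, (j : ℝ) / 2 ^ k) (1 / 2 ^ k) hε
    simp only [pcell, Uset, reduceIte]
    have e1 : (i : ℝ) / 2 ^ k + 1 / 2 ^ k = ((i : ℝ) + 1) / 2 ^ k := by ring
    have e2 : (j : ℝ) / 2 ^ k + 1 / 2 ^ k = ((j : ℝ) + 1) / 2 ^ k := by ring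
    rw [e1, e2] at this
    exact this

end BTaux
end
noncomputable section
namespace BTaux
open Set

lemma perturb {S : Set Pt} {x : Pt} (h : x ∈ interior S) (v : Pt) :
    ∃ δ : ℝ, 0 < δ ∧ x + δ • v ∈ S := by
  rcases Metric.isOpen_iff.1 isOpen_interior x h with ⟨r, hr, hball⟩
  have hv1 : (0 : ℝ) < ‖v‖ + 1 := by positivity
  refine ⟨r / (2 * (‖v‖ + 1)), by positivity, interior_subset (hball ?_)⟩
  rw [Metric.mem_ball, dist_self_add_left, norm_smul, Real.norm_eq_abs,
    abs_of_pos (by positivity)]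
  have h1 : r / (2 * (‖v‖ + 1)) * ‖v‖ < r / (2 * (‖v‖ + 1)) * (‖v‖ + 1) := by
    apply mul_lt_mul_of_pos_left (by linarith) (by positivity)
  have h2 : r / (2 * (‖v‖ + 1)) * (‖v‖ + 1) = r / 2 := by field_simp
  linarith

lemma int_up {k i j : ℕ} {x : Pt} (h : x ∈ interior (Uset k i j true)) :
    (i : ℝ) / 2 ^ k < x.1 ∧ (j : ℝ) / 2 ^ k < x.2 ∧
      x.1 + x.2 < (i : ℝ) / 2 ^ k + (j : ℝ) / 2 ^ k + 1 / 2 ^ k := by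
  simp only [Uset, reduceIte] at h
  obtain ⟨δ1, hδ1, hm1⟩ := perturb h ((-1 : ℝ), (0 : ℝ))
  obtain ⟨δ2, hδ2, hm2⟩ := perturb h ((0 : ℝ), (-1 : ℝ))
  obtain ⟨δ3, hδ3, hm3⟩ := perturb h ((1 : ℝ), (0 : ℝ))
  simp only [Set.mem_setOf_eq, Prod.fst_add, Prod.snd_add, Prod.smul_fst, Prod.smul_snd,
    smul_eq_mul, mul_neg_one, mul_zero, mul_one, add_zero] at hm1 hm2 hm3
  refine ⟨?_, ?_, ?_⟩
  · linarith [hm1.1]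
  · linarith [hm2.2.1]
  · linarith [hm3.2.2]

lemma int_dn {k i j : ℕ} {x : Pt} (h : x ∈ interior (Uset k i j false)) :
    x.1 < ((i : ℝ) + 1) / 2 ^ k ∧ x.2 < ((j : ℝ) + 1) / 2 ^ k ∧
      ((i : ℝ) + 1) / 2 ^ k + ((j : ℝ) + 1) / 2 ^ k - 1 / 2 ^ k < x.1 + x.2 := by
  simp only [Uset, Bool.false_eq_true, reduceIte] at h
  obtain ⟨δ1, hδ1, hm1⟩ := perturb h ((1 : ℝ), (0 : ℝ))
  obtain ⟨δ2, hδ2, hm2⟩ := perturb h ((0 : ℝ), (1 : ℝ))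
  obtain ⟨δ3, hδ3, hm3⟩ := perturb h ((-1 : ℝ), (0 : ℝ))
  simp only [Set.mem_setOf_eq, Prod.fst_add, Prod.snd_add, Prod.smul_fst, Prod.smul_snd,
    smul_eq_mul, mul_neg_one, mul_zero, mul_one, add_zero] at hm1 hm2 hm3
  refine ⟨?_, ?_, ?_⟩
  · linarith [hm1.1]
  · linarith [hm2.2.1]
  · linarith [hm3.2.2]

lemma frontier_box {a b : ℝ} (ha : 0 < a) (hb : 0 < b) {w : Pt}
    (hw : w ∈ frontier (Set.Ico 0 a ×ˢ Set.Ico 0 b)) :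
    (0 ≤ w.1 ∧ w.1 ≤ a ∧ 0 ≤ w.2 ∧ w.2 ≤ b) ∧
      (w.1 = 0 ∨ w.1 = a ∨ w.2 = 0 ∨ w.2 = b) := by
  have h1 : frontier (Set.Ico 0 a ×ˢ Set.Ico 0 b)
      ⊆ (Set.Icc 0 a ×ˢ Set.Icc 0 b) \ (Set.Ioo 0 a ×ˢ Set.Ioo 0 b) := by
    intro z hz
    constructor
    · have := hz.1
      rw [closure_prod_eq, closure_Ico ha.ne, closure_Ico hb.ne] at this
      exact this
    · intro hcon
      exact hz.2 (by rw [interior_prod_eq, interior_Ico, interior_Ico]; exact hcon)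
  obtain ⟨⟨⟨ha1, ha2⟩, hb1, hb2⟩, hno⟩ := h1 hw
  refine ⟨⟨ha1, ha2, hb1, hb2⟩, ?_⟩
  by_contra hc
  push_neg at hc
  obtain ⟨h01, hA1, h02, hB2⟩ := hc
  exact hno ⟨⟨lt_of_le_of_ne ha1 (Ne.symm h01), lt_of_le_of_ne ha2 hA1⟩,
    lt_of_le_of_ne hb1 (Ne.symm h02), lt_of_le_of_ne hb2 hB2⟩

end BTaux
end
noncomputable section
namespace BTaux
open Set

def PredN (n p q : ℕ) (x : ℕ × ℕ × Bool) : Prop :=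
  ((x.2.2 = true ∧ x.1 + x.2.1 + 1 ≤ n) ∨ (x.2.2 = false ∧ x.1 + x.2.1 + 2 ≤ n)) ∧
    ((x.1 = p ∧ x.2.1 ≤ q) ∨ (x.2.1 = q ∧ x.1 ≤ p))

instance (n p q : ℕ) : DecidablePred (PredN n p q) := fun _ => by
  unfold PredN; infer_instance

def enc (n p : ℕ) (x : ℕ × ℕ × Bool) : ℕ :=
  cond x.2.2 (if x.1 = p then 2 * x.2.1 else 2 * n - 2 - 2 * x.1)
             (if x.1 = p then 2 * x.2.1 + 1 else 2 * n - 3 - 2 * x.1)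

lemma countKF (n p q : ℕ) (hn : 1 ≤ n) (hp : p < n) (hq : q < n) :
    ((Finset.range n ×ˢ Finset.range n ×ˢ (Finset.univ : Finset Bool)).filter
        (PredN n p q)).card ≤ 2 * n - 1 := by
  have hcard : (Finset.range (2 * n - 1)).card = 2 * n - 1 := Finset.card_range _
  rw [← hcard]
  apply Finset.card_le_card_of_injOn (enc n p)
  · rintro ⟨i, j, u⟩ hx
    simp only [Finset.mem_coe, Finset.mem_filter, Finset.mem_product, Finset.mem_range, PredN] at hx
    obtain ⟨⟨hi, hj, -⟩, hsz, hdisj⟩ := hx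
    rcases u with _ | _ <;>
      simp only [Bool.false_eq_true, Bool.true_eq_false, false_and, true_and, and_false,
        false_or, or_false] at hsz <;>
      simp only [enc, cond, Finset.mem_coe, Finset.mem_range] <;>
      split_ifs <;> omega
  · rintro ⟨i, j, u⟩ hx ⟨i', j', u'⟩ hy hxy
    simp only [Finset.coe_filter, Finset.mem_product, Finset.mem_range, Set.mem_setOf_eq,
      PredN, Finset.mem_coe] at hx hy
    obtain ⟨-, hsz, hdisj⟩ := hx
    obtain ⟨-, hsz', hdisj'⟩ := hy
    rcases u with _ | _ <;> rcases u' with _ | _ <;>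
      simp only [Bool.false_eq_true, Bool.true_eq_false, false_and, true_and, and_false,
        false_or, or_false] at hsz hsz' <;>
      simp only [enc, cond] at hxy <;>
      simp only [Prod.mk.injEq, and_true, Bool.true_eq_false, Bool.false_eq_true, and_false] <;>
      split_ifs at hxy <;> omega
end BTaux
end

/-- for `N = 4^k`, `k ≥ 1`, the boundary of any anchored parallelogram
`𝒯_{a,b,C}` intersects the interiors of at most `2√N - 1` of the `N` subtriangles of
the standard level-`k` subdivision of `Ω = Δ(A,B,C)`. -/
theorem boundary_touches_card_le (A B C : Pt) (h : Nondeg A B C) (k : ℕ) (hk : 1 ≤ k)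
    (a b : ℝ) (ha : 0 < a) (ha' : a ≤ 1) (hb : 0 < b) (hb' : b ≤ 1) :
    (Nat.card {S : Tri2 | S ∈ level (A, B, C) k ∧
        (interior (triSet S) ∩ frontier (parlg A B C a b)).Nonempty} : ℝ)
      ≤ 2 * Real.sqrt ((4 : ℝ) ^ k) - 1 := by
  classical
  have hD := BTaux.det_ne A B C h
  have hn2 : (0 : ℝ) < (2 : ℝ) ^ k := by positivity
  have hnn : ((2 : ℕ) ^ k : ℝ) = (2 : ℝ) ^ k := by push_cast; ring
  -- the indices p and q
  set p : ℕ := ⌈a * 2 ^ k⌉₊ - 1 with hpdef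
  set q : ℕ := ⌈b * 2 ^ k⌉₊ - 1 with hqdef
  have hpc : 1 ≤ ⌈a * 2 ^ k⌉₊ := Nat.ceil_pos.mpr (by positivity)
  have hqc : 1 ≤ ⌈b * 2 ^ k⌉₊ := Nat.ceil_pos.mpr (by positivity)
  have hpcast : ((p : ℝ)) = (⌈a * 2 ^ k⌉₊ : ℝ) - 1 := by
    rw [hpdef, Nat.cast_sub hpc]; simp
  have hqcast : ((q : ℝ)) = (⌈b * 2 ^ k⌉₊ : ℝ) - 1 := by
    rw [hqdef, Nat.cast_sub hqc]; simp
  have hp2 : a * 2 ^ k ≤ (p : ℝ) + 1 := by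
    rw [hpcast]; linarith [Nat.le_ceil (a * 2 ^ k)]
  have hq2 : b * 2 ^ k ≤ (q : ℝ) + 1 := by
    rw [hqcast]; linarith [Nat.le_ceil (b * 2 ^ k)]
  have hp1 : (p : ℝ) < a * 2 ^ k := by
    rw [hpcast]
    linarith [Nat.ceil_lt_add_one (by positivity : (0:ℝ) ≤ a * 2 ^ k)]
  have hq1 : (q : ℝ) < b * 2 ^ k := by
    rw [hqcast]
    linarith [Nat.ceil_lt_add_one (by positivity : (0:ℝ) ≤ b * 2 ^ k)]
  have hpn : p < 2 ^ k := by
    have : (p : ℝ) < ((2 ^ k : ℕ) : ℝ) := by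
      push_cast; nlinarith
    exact_mod_cast this
  have hqn : q < 2 ^ k := by
    have : (q : ℝ) < ((2 ^ k : ℕ) : ℝ) := by
      push_cast; nlinarith
    exact_mod_cast this
  -- the finsets
  set KF : Finset (ℕ × ℕ × Bool) :=
    (Finset.range (2 ^ k) ×ˢ Finset.range (2 ^ k) ×ˢ (Finset.univ : Finset Bool)).filter
      (BTaux.PredN (2 ^ k) p q) with hKF
  set Fimg : Finset Tri2 :=
    KF.image (fun x => BTaux.mapTri (BTaux.phi A B C) (BTaux.pcell k x.1 x.2.1 x.2.2)) with hFimg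
  -- main geometric inclusion
  have hsub : {S : Tri2 | S ∈ level (A, B, C) k ∧
      (interior (triSet S) ∩ frontier (parlg A B C a b)).Nonempty} ⊆ ↑Fimg := by
    rintro S ⟨hlev, z, hzmem⟩
    obtain ⟨i, j, u, hcon, rfl⟩ := BTaux.levelA A B C k S hlev
    -- identify interior and frontier through φ
    have hcoe : ⇑(BTaux.phiHomeo A B C hD) = BTaux.phi A B C := rfl
    have htri : triSet (BTaux.mapTri (BTaux.phi A B C) (BTaux.pcell k i j u))
        = BTaux.phi A B C '' (BTaux.Uset k i j u) := by
      show triangle _ _ _ = _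
      rw [BTaux.mapTri, BTaux.image_triangle, BTaux.hull_pcell]
    have hIint : interior (triSet (BTaux.mapTri (BTaux.phi A B C) (BTaux.pcell k i j u)))
        = BTaux.phi A B C '' interior (BTaux.Uset k i j u) := by
      rw [htri, ← hcoe, Homeomorph.image_interior]
    have hfr : frontier (parlg A B C a b)
        = BTaux.phi A B C '' frontier (Set.Ico 0 a ×ˢ Set.Ico 0 b) := by
      rw [BTaux.image_parlg, ← hcoe, Homeomorph.image_frontier]
    rw [hIint, hfr] at hzmem
    obtain ⟨⟨w, hwint, hwz⟩, ⟨w', hwfr, hw'z⟩⟩ := hzmem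
    have hww : w' = w := BTaux.phi_inj A B C hD (by rw [hwz, hw'z])
    rw [hww] at hwfr
    obtain ⟨⟨hw10, hw1a, hw20, hw2b⟩, hcases⟩ := BTaux.frontier_box ha hb hwfr
    -- derive the index conditions
    have hdisj : (i = p ∧ j ≤ q) ∨ (j = q ∧ i ≤ p) := by
      have hi0 : (0 : ℝ) ≤ (i : ℝ) / 2 ^ k := by positivity
      have hj0 : (0 : ℝ) ≤ (j : ℝ) / 2 ^ k := by positivity
      rcases u with _ | _
      · -- down cell
        obtain ⟨s1, s2, s3⟩ := BTaux.int_dn hwint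
        have e1 : ((i : ℝ) + 1) / 2 ^ k + ((j : ℝ) + 1) / 2 ^ k - 1 / 2 ^ k
            = (i : ℝ) / 2 ^ k + ((j : ℝ) + 1) / 2 ^ k := by ring
        have e2 : ((i : ℝ) + 1) / 2 ^ k + ((j : ℝ) + 1) / 2 ^ k - 1 / 2 ^ k
            = ((i : ℝ) + 1) / 2 ^ k + (j : ℝ) / 2 ^ k := by ring
        rcases hcases with h0 | hA | h0' | hB
        · exfalso
          rw [h0, e1] at s3
          linarith
        · left
          rw [hA] at s1 s3
          have r1 : a * 2 ^ k < (i : ℝ) + 1 := by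
            rw [lt_div_iff₀ hn2] at s1; linarith [s1]
          have r2 : (i : ℝ) < a * 2 ^ k := by
            have : (i : ℝ) / 2 ^ k < a := by rw [e1] at s3; linarith
            rw [div_lt_iff₀ hn2] at this; linarith
          have c1 : i < p + 1 := by exact_mod_cast
            (by linarith : (i : ℝ) < (p : ℝ) + 1)
          have c2 : p < i + 1 := by exact_mod_cast
            (by linarith : (p : ℝ) < (i : ℝ) + 1)
          have hip : i = p := by omega
          refine ⟨hip, ?_⟩
          have hale : a ≤ ((i : ℝ) + 1) / 2 ^ k := by
            rw [le_div_iff₀ hn2]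
            have : (p : ℝ) + 1 = (i : ℝ) + 1 := by rw [hip]
            linarith
          have r3 : (j : ℝ) / 2 ^ k < b := by
            rw [e2] at s3
            linarith
          rw [div_lt_iff₀ hn2] at r3
          have : j < q + 1 := by exact_mod_cast
            (by linarith : (j : ℝ) < (q : ℝ) + 1)
          omega
        · exfalso
          rw [h0', e2] at s3
          linarith
        · right
          rw [hB] at s2 s3
          have r1 : b * 2 ^ k < (j : ℝ) + 1 := by
            rw [lt_div_iff₀ hn2] at s2; linarith [s2]
          have r2 : (j : ℝ) < b * 2 ^ k := by
            have : (j : ℝ) / 2 ^ k < b := by rw [e2] at s3; linarith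
            rw [div_lt_iff₀ hn2] at this; linarith
          have c1 : j < q + 1 := by exact_mod_cast
            (by linarith : (j : ℝ) < (q : ℝ) + 1)
          have c2 : q < j + 1 := by exact_mod_cast
            (by linarith : (q : ℝ) < (j : ℝ) + 1)
          have hjq : j = q := by omega
          refine ⟨hjq, ?_⟩
          have hble : b ≤ ((j : ℝ) + 1) / 2 ^ k := by
            rw [le_div_iff₀ hn2]
            have : (q : ℝ) + 1 = (j : ℝ) + 1 := by rw [hjq]
            linarith
          have r3 : (i : ℝ) / 2 ^ k < a := by
            rw [e1] at s3
            linarith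
          rw [div_lt_iff₀ hn2] at r3
          have : i < p + 1 := by exact_mod_cast
            (by linarith : (i : ℝ) < (p : ℝ) + 1)
          omega
      · -- up cell
        obtain ⟨s1, s2, s3⟩ := BTaux.int_up hwint
        rcases hcases with h0 | hA | h0' | hB
        · exfalso; rw [h0] at s1; linarith
        · left
          rw [hA] at s1 s3
          have r1 : (i : ℝ) < a * 2 ^ k := by
            rw [div_lt_iff₀ hn2] at s1; linarith
          have r2 : a * 2 ^ k < (i : ℝ) + 1 := by
            have : a < ((i : ℝ) + 1) / 2 ^ k := by
              rw [lt_div_iff₀ hn2]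
              have e3 : (i : ℝ) / 2 ^ k + (j : ℝ) / 2 ^ k + 1 / 2 ^ k
                  = ((i : ℝ) + 1) / 2 ^ k + (j : ℝ) / 2 ^ k := by ring
              rw [e3] at s3
              have : a < ((i : ℝ) + 1) / 2 ^ k := by linarith
              rw [lt_div_iff₀ hn2] at this
              linarith
            rw [lt_div_iff₀ hn2] at this
            linarith
          have c1 : i < p + 1 := by exact_mod_cast
            (by linarith : (i : ℝ) < (p : ℝ) + 1)
          have c2 : p < i + 1 := by exact_mod_cast
            (by linarith : (p : ℝ) < (i : ℝ) + 1)
          have hip : i = p := by omega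
          refine ⟨hip, ?_⟩
          have r3 : (j : ℝ) < b * 2 ^ k := by
            have : (j : ℝ) / 2 ^ k < b := lt_of_lt_of_le s2 hw2b
            rw [div_lt_iff₀ hn2] at this; linarith
          have : j < q + 1 := by exact_mod_cast
            (by linarith : (j : ℝ) < (q : ℝ) + 1)
          omega
        · exfalso; rw [h0'] at s2; linarith
        · right
          rw [hB] at s2 s3
          have r1 : (j : ℝ) < b * 2 ^ k := by
            rw [div_lt_iff₀ hn2] at s2; linarith
          have r2 : b * 2 ^ k < (j : ℝ) + 1 := by
            have : b < ((j : ℝ) + 1) / 2 ^ k := by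
              rw [lt_div_iff₀ hn2]
              have e3 : (i : ℝ) / 2 ^ k + (j : ℝ) / 2 ^ k + 1 / 2 ^ k
                  = ((j : ℝ) + 1) / 2 ^ k + (i : ℝ) / 2 ^ k := by ring
              rw [e3] at s3
              have : b < ((j : ℝ) + 1) / 2 ^ k := by linarith
              rw [lt_div_iff₀ hn2] at this
              linarith
            rw [lt_div_iff₀ hn2] at this
            linarith
          have c1 : j < q + 1 := by exact_mod_cast
            (by linarith : (j : ℝ) < (q : ℝ) + 1)
          have c2 : q < j + 1 := by exact_mod_cast
            (by linarith : (q : ℝ) < (j : ℝ) + 1)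
          have hjq : j = q := by omega
          refine ⟨hjq, ?_⟩
          have r3 : (i : ℝ) < a * 2 ^ k := by
            have : (i : ℝ) / 2 ^ k < a := lt_of_lt_of_le s1 hw1a
            rw [div_lt_iff₀ hn2] at this; linarith
          have : i < p + 1 := by exact_mod_cast
            (by linarith : (i : ℝ) < (p : ℝ) + 1)
          omega
    -- assemble membership
    have hsz : (u = true ∧ i + j + 1 ≤ 2 ^ k) ∨ (u = false ∧ i + j + 2 ≤ 2 ^ k) := by
      rcases u with _ | _
      · right; exact ⟨rfl, by simpa using hcon⟩
      · left; exact ⟨rfl, by simpa using hcon⟩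
    have hPred : BTaux.PredN (2 ^ k) p q (i, j, u) := ⟨hsz, hdisj⟩
    have hrange : i < 2 ^ k ∧ j < 2 ^ k := by
      rcases hsz with ⟨-, hs⟩ | ⟨-, hs⟩ <;> omega
    refine Finset.mem_coe.mpr (Finset.mem_image.mpr ⟨(i, j, u), ?_, rfl⟩)
    rw [hKF, Finset.mem_filter]
    exact ⟨by simp [Finset.mem_product, hrange.1, hrange.2], hPred⟩
  -- counting
  have hcount : Nat.card {S : Tri2 | S ∈ level (A, B, C) k ∧
      (interior (triSet S) ∩ frontier (parlg A B C a b)).Nonempty} ≤ 2 * 2 ^ k - 1 := by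
    calc Nat.card {S : Tri2 | S ∈ level (A, B, C) k ∧
          (interior (triSet S) ∩ frontier (parlg A B C a b)).Nonempty}
        ≤ Nat.card ↑(Fimg : Set Tri2) := Nat.card_mono Fimg.finite_toSet hsub
      _ = Fimg.card := by rw [Nat.card_coe_set_eq, Set.ncard_coe_finset]
      _ ≤ KF.card := Finset.card_image_le
      _ ≤ 2 * 2 ^ k - 1 := BTaux.countKF (2 ^ k) p q Nat.one_le_two_pow hpn hqn
  -- final numerics
  have hsqrt : Real.sqrt ((4 : ℝ) ^ k) = 2 ^ k := by
    have h4 : ((4 : ℝ)) ^ k = ((2 : ℝ) ^ k) ^ 2 := by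
      rw [show (4 : ℝ) = 2 ^ 2 by norm_num, ← pow_mul, ← pow_mul, mul_comm]
    rw [h4, Real.sqrt_sq (by positivity)]
  have h1n : (1 : ℕ) ≤ 2 * 2 ^ k := by have := Nat.one_le_two_pow (n := k); omega
  calc (Nat.card {S : Tri2 | S ∈ level (A, B, C) k ∧
        (interior (triSet S) ∩ frontier (parlg A B C a b)).Nonempty} : ℝ)
      ≤ ((2 * 2 ^ k - 1 : ℕ) : ℝ) := Nat.cast_le.mpr hcount
    _ = 2 * (2 : ℝ) ^ k - 1 := by rw [Nat.cast_sub h1n]; push_cast; ring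
    _ = 2 * Real.sqrt ((4 : ℝ) ^ k) - 1 := by rw [hsqrt]
end
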